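/- arXiv:2103.15097 — 3 statements merged into one kernel-verified Lean document; each statement's English description precedes it below -/
import Mathlib

section
/- Let Φ : [a,b] → ℝ^{n×n} satisfy the matrix ODE Φ'(t) = A(t)Φ(t) with Φ(a) = I_n, where A is continuous. Then for each k ∈ {1,…,n}, Φ^{(k)}(t) satisfies (d/dt)Φ^{(k)}(t) = A^{[k]}(t) Φ^{(k)}(t) with Φ^{(k)}(a) = I_{binom(n,k)}. -/
open Matrix

/-- The `k`-multiplicative compound of a matrix: the matrix of all `k × k` minors,
indexed by the `k`-element subsets of the row and column index sets (ordered
increasingly / lexicographically). -/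
noncomputable def mulCompound {𝕜 : Type*} [CommRing 𝕜] {n m : ℕ}
    (A : Matrix (Fin n) (Fin m) 𝕜) (k : ℕ) :
    Matrix {s : Finset (Fin n) // s.card = k} {t : Finset (Fin m) // t.card = k} 𝕜 :=
  fun α β => (A.submatrix (α.1.orderEmbOfFin α.2) (β.1.orderEmbOfFin β.2)).det

/-- The `k`-additive compound: `A^{[k]} := (d/dε) (I + ε A)^{(k)} |_{ε = 0}`. -/
noncomputable def addCompound {𝕜 : Type*} [NontriviallyNormedField 𝕜] {n : ℕ}
    (A : Matrix (Fin n) (Fin n) 𝕜) (k : ℕ) :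
    Matrix {s : Finset (Fin n) // s.card = k} {s : Finset (Fin n) // s.card = k} 𝕜 :=
  fun α β => deriv (fun ε : 𝕜 => mulCompound (1 + ε • A) k α β) 0
open Matrix Equiv Finset Function

variable {R : Type*} [CommRing R] {k n : ℕ}

private theorem cb_aux {ι : Type*} [DecidableEq ι] {M : Matrix (Fin k) ι R}
    {N : Matrix ι (Fin k) R} {p : Fin k → ι} (H : ¬Injective p) :
    (∑ σ : Perm (Fin k), Perm.sign σ • ∏ x, M (σ x) (p x) * N (p x) x) = 0 := by
  obtain ⟨i, j, hpij, hij⟩ : ∃ i j, p i = p j ∧ i ≠ j := by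
    rw [Injective] at H
    push_neg at H
    obtain ⟨i, j, h1, h2⟩ := H
    exact ⟨i, j, h1, h2⟩
  exact
    Finset.sum_involution (fun σ _ => σ * Equiv.swap i j)
      (fun σ _ => by
        have : (∏ x, M (σ x) (p x)) = ∏ x, M ((σ * Equiv.swap i j) x) (p x) :=
          Fintype.prod_equiv (Equiv.swap i j) _ _ (by simp [Equiv.apply_swap_eq_self hpij])
        simp [prod_mul_distrib, this, Perm.sign_swap hij, Units.smul_def, mul_assoc])
      (fun σ _ _ => (not_congr Equiv.mul_swap_eq_iff).mpr hij) (fun _ _ => Finset.mem_univ _)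
      fun σ _ => Equiv.mul_swap_involutive i j σ

private theorem det_mul_expand {ι : Type*} [Fintype ι] [DecidableEq ι]
    (M : Matrix (Fin k) ι R) (N : Matrix ι (Fin k) R) :
    (M * N).det = ∑ p ∈ (Finset.univ : Finset (Fin k → ι)).filter Injective,
      ∑ σ : Perm (Fin k), Perm.sign σ • ∏ i, M (σ i) (p i) * N (p i) i := by
  classical
  have h1 : (M * N).det
      = ∑ p : Fin k → ι, ∑ σ : Perm (Fin k),
          Perm.sign σ • ∏ i, M (σ i) (p i) * N (p i) i := by
    simp only [det_apply, mul_apply, prod_univ_sum, Finset.smul_sum, Fintype.piFinset_univ]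
    rw [Finset.sum_comm]
  rw [h1]
  refine (Finset.sum_subset (Finset.filter_subset _ _) fun f _ hinj => cb_aux ?_).symm
  simpa using hinj

theorem cauchyBinet (M : Matrix (Fin k) (Fin n) R) (N : Matrix (Fin n) (Fin k) R) :
    (M * N).det = ∑ γ : {s : Finset (Fin n) // s.card = k},
      ((M.submatrix id (γ.1.orderEmbOfFin γ.2)) * (N.submatrix (γ.1.orderEmbOfFin γ.2) id)).det := by
  classical
  simp only [det_mul_expand]
  conv_rhs => rw [Finset.sum_sigma']
  have himg : ∀ (γ : {s : Finset (Fin n) // s.card = k}) (q : Fin k → Fin k), Injective q →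
      Finset.univ.image ((γ.1.orderEmbOfFin γ.2) ∘ q) = γ.1 := by
    intro γ q hq
    have h1 : Finset.univ.image ((γ.1.orderEmbOfFin γ.2) ∘ q)
        = (Finset.univ.image q).image (γ.1.orderEmbOfFin γ.2) := by
      rw [Finset.image_image]
    have h2 : Finset.univ.image q = Finset.univ :=
      Finset.image_univ_of_surjective ((Finite.injective_iff_surjective).mp hq)
    rw [h1, h2]
    apply Finset.coe_injective
    rw [Finset.coe_image, Finset.coe_univ, Set.image_univ, Finset.range_orderEmbOfFin]
  symm
  refine Finset.sum_bij
    (i := fun (x : Σ _ : {s : Finset (Fin n) // s.card = k}, Fin k → Fin k) _ =>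
      (x.1.1.orderEmbOfFin x.1.2) ∘ x.2) ?_ ?_ ?_ ?_
  · rintro ⟨γ, q⟩ hmem
    simp only [Finset.mem_sigma, Finset.mem_filter, Finset.mem_univ, true_and] at hmem ⊢
    exact (γ.1.orderEmbOfFin γ.2).injective.comp hmem
  · rintro ⟨γ1, q1⟩ h1 ⟨γ2, q2⟩ h2 heq
    simp only [Finset.mem_sigma, Finset.mem_filter, Finset.mem_univ, true_and] at h1 h2
    beta_reduce at heq
    have hγ : γ1 = γ2 := by
      have := himg γ1 q1 h1
      rw [heq, himg γ2 q2 h2] at this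
      exact Subtype.ext this.symm
    subst hγ
    have hq : q1 = q2 := by
      funext i
      have := congrFun heq i
      exact (γ1.1.orderEmbOfFin γ1.2).injective this
    rw [hq]
  · intro p hp
    simp only [Finset.mem_filter, Finset.mem_univ, true_and] at hp
    have hcard : (Finset.univ.image p).card = k := by
      rw [Finset.card_image_of_injective _ hp, Finset.card_univ, Fintype.card_fin]
    set γ : {s : Finset (Fin n) // s.card = k} := ⟨Finset.univ.image p, hcard⟩ with hγdef
    set q : Fin k → Fin k := fun i => (Finset.orderIsoOfFin γ.1 γ.2).symm
      ⟨p i, by simp [hγdef, Finset.mem_image]⟩ with hqdef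
    have hq : Injective q := by
      intro i j hij
      have := congrArg (fun z => ((Finset.orderIsoOfFin γ.1 γ.2) z : Fin n)) hij
      simp only [hqdef, OrderIso.apply_symm_apply] at this
      exact hp this
    refine ⟨⟨γ, q⟩, ?_, ?_⟩
    · simp only [Finset.mem_sigma, Finset.mem_filter, Finset.mem_univ, true_and]
      exact hq
    · funext i
      simp only [Function.comp_apply, hqdef]
      rw [← Finset.coe_orderIsoOfFin_apply, OrderIso.apply_symm_apply]
  · rintro ⟨γ, q⟩ hmem
    rfl

theorem mulCompound_mul {R : Type*} [CommRing R] {n k : ℕ} (M N : Matrix (Fin n) (Fin n) R)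
    (α β : {s : Finset (Fin n) // s.card = k}) :
    mulCompound (M * N) k α β
      = ∑ γ : {s : Finset (Fin n) // s.card = k}, mulCompound M k α γ * mulCompound N k γ β := by
  unfold mulCompound
  have h : (M * N).submatrix (α.1.orderEmbOfFin α.2) (β.1.orderEmbOfFin β.2)
      = (M.submatrix (α.1.orderEmbOfFin α.2) id) * (N.submatrix id (β.1.orderEmbOfFin β.2)) := by
    ext i j
    simp [Matrix.mul_apply]
  rw [h, cauchyBinet]
  refine Finset.sum_congr rfl fun γ _ => ?_
  rw [Matrix.det_mul]
  simp [Matrix.submatrix_submatrix]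

theorem mulCompound_one {R : Type*} [CommRing R] {n k : ℕ} :
    mulCompound (1 : Matrix (Fin n) (Fin n) R) k = 1 := by
  ext α β
  by_cases hab : α = β
  · subst hab
    have : (1 : Matrix (Fin n) (Fin n) R).submatrix (α.1.orderEmbOfFin α.2)
        (α.1.orderEmbOfFin α.2) = 1 := by
      ext i j
      simp only [Matrix.submatrix_apply, Matrix.one_apply,
        (α.1.orderEmbOfFin α.2).injective.eq_iff]
    simp [mulCompound, this]
  · have hne : ∃ x ∈ α.1, x ∉ β.1 := by
      by_contra hc
      push_neg at hc
      have hsub : α.1 ⊆ β.1 := hc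
      have : α.1 = β.1 := Finset.eq_of_subset_of_card_le hsub (by rw [α.2, β.2])
      exact hab (Subtype.ext this)
    obtain ⟨x, hxα, hxβ⟩ := hne
    obtain ⟨i, hi⟩ : ∃ i, α.1.orderEmbOfFin α.2 i = x := by
      have : x ∈ Set.range (α.1.orderEmbOfFin α.2) := by
        rw [Finset.range_orderEmbOfFin]; exact hxα
      exact this
    have hrow : ∀ j, (1 : Matrix (Fin n) (Fin n) R).submatrix (α.1.orderEmbOfFin α.2)
        (β.1.orderEmbOfFin β.2) i j = 0 := by
      intro j
      simp only [Matrix.submatrix_apply, hi, Matrix.one_apply]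
      have : x ≠ β.1.orderEmbOfFin β.2 j := by
        intro hEq
        exact hxβ (hEq ▸ Finset.orderEmbOfFin_mem _ _ _)
      simp [this]
    have : mulCompound (1 : Matrix (Fin n) (Fin n) R) k α β = 0 :=
      Matrix.det_eq_zero_of_row_eq_zero i hrow
    rw [this, Matrix.one_apply_ne hab]

section Analysis

variable {n k : ℕ}

private theorem diff_minor (α β : {s : Finset (Fin n) // s.card = k}) :
    Differentiable ℝ (fun v : Fin n → Fin n → ℝ => mulCompound (Matrix.of v) k α β) := by
  classical
  have hrw : (fun v : Fin n → Fin n → ℝ => mulCompound (Matrix.of v) k α β)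
      = fun v => ∑ σ : Equiv.Perm (Fin k), ((Equiv.Perm.sign σ : ℤ) : ℝ) *
          ∏ i, v (α.1.orderEmbOfFin α.2 (σ i)) (β.1.orderEmbOfFin β.2 i) := by
    funext v
    simp [mulCompound, Matrix.det_apply, Units.smul_def, zsmul_eq_mul]
  rw [hrw]
  have hcoord : ∀ (i j : Fin n), Differentiable ℝ (fun v : Fin n → Fin n → ℝ => v i j) := by
    intro i j
    exact ((ContinuousLinearMap.proj (R := ℝ) (φ := fun _ : Fin n => ℝ) j).comp
      (ContinuousLinearMap.proj (R := ℝ) (φ := fun _ : Fin n => Fin n → ℝ) i)).differentiable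
  have hprod : ∀ σ : Equiv.Perm (Fin k), Differentiable ℝ (fun v : Fin n → Fin n → ℝ =>
      ∏ i, v (α.1.orderEmbOfFin α.2 (σ i)) (β.1.orderEmbOfFin β.2 i)) :=
    fun σ => fun v => (HasFDerivAt.finset_prod (u := Finset.univ)
      (g := fun i (w : Fin n → Fin n → ℝ) => w (α.1.orderEmbOfFin α.2 (σ i))
        (β.1.orderEmbOfFin β.2 i))
      (fun i _ => ((hcoord _ _).differentiableAt (x := v)).hasFDerivAt)).differentiableAt
  exact Differentiable.fun_sum fun σ _ => (hprod σ).const_mul _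

end Analysis

/-- If `Φ` solves `Φ′(t) = A(t) Φ(t)`, `Φ(a) = I`, then its `k`-th multiplicative compound
solves `(d/dt) Φ^{(k)}(t) = A^{[k]}(t) Φ^{(k)}(t)` with `Φ^{(k)}(a) = I`. -/
theorem mulCompound_ode {n : ℕ} (a b : ℝ) (hab : a ≤ b)
    (A Φ : ℝ → Matrix (Fin n) (Fin n) ℝ)
    (hA : ∀ i j, ContinuousOn (fun t => A t i j) (Set.Icc a b))
    (hΦ : ∀ t ∈ Set.Icc a b, ∀ i j, HasDerivAt (fun s => Φ s i j) ((A t * Φ t) i j) t)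
    (hΦa : Φ a = 1)
    (k : ℕ) (hk1 : 1 ≤ k) (hk : k ≤ n) :
    (∀ t ∈ Set.Icc a b, ∀ α β, HasDerivAt (fun s => mulCompound (Φ s) k α β)
        ((addCompound (A t) k * mulCompound (Φ t) k) α β) t) ∧
      mulCompound (Φ a) k = 1 := by
  classical
  constructor
  · intro t ht α β
    set V : Fin n → Fin n → ℝ := fun i j => (A t * Φ t) i j with hV
    set Φp : Fin n → Fin n → ℝ := fun i j => Φ t i j with hΦp
    have hΦ' : HasDerivAt (fun s => (fun i j => Φ s i j)) V t :=
      hasDerivAt_pi.mpr fun i => hasDerivAt_pi.mpr fun j => hΦ t ht i j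
    set g : {s : Finset (Fin n) // s.card = k} → (Fin n → Fin n → ℝ) → ℝ :=
      fun γ v => mulCompound (Matrix.of v) k α γ with hgdef
    have hg : ∀ γ, Differentiable ℝ (g γ) := fun γ => diff_minor α γ
    set D := fderiv ℝ (g β) Φp with hD
    have hfd : HasFDerivAt (g β) D Φp := ((hg β) Φp).hasFDerivAt
    have h1 : HasDerivAt (fun s => g β (fun i j => Φ s i j)) (D V) t :=
      by have := hfd.comp_hasDerivAt t hΦ'; exact this
    have hline : HasDerivAt (fun ε : ℝ => Φp + ε • V) V 0 := by
      simpa using ((hasDerivAt_id (0 : ℝ)).smul_const V).const_add Φp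
    have hpt : Φp = Φp + (0 : ℝ) • V := by simp
    have hfd' : HasFDerivAt (g β) D (Φp + (0 : ℝ) • V) := hpt ▸ hfd
    have h2 : HasDerivAt (fun ε : ℝ => g β (Φp + ε • V)) (D V) 0 := by
      have := hfd'.comp_hasDerivAt 0 hline
      simpa [Function.comp_def] using this
    have hfun : (fun ε : ℝ => g β (Φp + ε • V))
        = fun ε : ℝ => ∑ γ, mulCompound (1 + ε • A t) k α γ * mulCompound (Φ t) k γ β := by
      funext ε
      have hmat : (Matrix.of (Φp + ε • V) : Matrix (Fin n) (Fin n) ℝ)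
          = (1 + ε • A t) * Φ t := by
        ext i j
        rw [Matrix.add_mul, Matrix.one_mul, Matrix.smul_mul]
        simp [hΦp, hV, Matrix.add_apply, Matrix.smul_apply]
      show mulCompound (Matrix.of (Φp + ε • V)) k α β = _
      rw [hmat, mulCompound_mul]
    rw [hfun] at h2
    have h4 : ∀ γ, HasDerivAt (fun ε : ℝ => mulCompound (1 + ε • A t) k α γ)
        (addCompound (A t) k α γ) 0 := by
      intro γ
      set onep : Fin n → Fin n → ℝ := fun i j => (1 : Matrix (Fin n) (Fin n) ℝ) i j with h1p
      set Ap : Fin n → Fin n → ℝ := fun i j => A t i j with hAp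
      have hlin : HasDerivAt (fun ε : ℝ => onep + ε • Ap) Ap 0 := by
        simpa using ((hasDerivAt_id (0 : ℝ)).smul_const Ap).const_add onep
      have hfd1 : HasFDerivAt (g γ) (fderiv ℝ (g γ) (onep + (0 : ℝ) • Ap))
          (onep + (0 : ℝ) • Ap) := ((hg γ) _).hasFDerivAt
      have h5 : HasDerivAt (fun ε : ℝ => g γ (onep + ε • Ap))
          (fderiv ℝ (g γ) (onep + (0 : ℝ) • Ap) Ap) 0 :=
        by have := hfd1.comp_hasDerivAt 0 hlin; exact this
      have hfun2 : (fun ε : ℝ => g γ (onep + ε • Ap))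
          = fun ε : ℝ => mulCompound (1 + ε • A t) k α γ := by
        funext ε
        show mulCompound (Matrix.of (onep + ε • Ap)) k α γ = _
        have hm : (Matrix.of (onep + ε • Ap) : Matrix (Fin n) (Fin n) ℝ) = 1 + ε • A t := by
          ext i j
          simp [h1p, hAp, Matrix.add_apply, Matrix.smul_apply]
        rw [hm]
      rw [hfun2] at h5
      have hval : addCompound (A t) k α γ
          = fderiv ℝ (g γ) (onep + (0 : ℝ) • Ap) Ap := by
        show deriv (fun ε : ℝ => mulCompound (1 + ε • A t) k α γ) 0 = _
        exact h5.deriv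
      rw [hval]
      exact h5
    have h6 : HasDerivAt
        (fun ε : ℝ => ∑ γ, mulCompound (1 + ε • A t) k α γ * mulCompound (Φ t) k γ β)
        (∑ γ, addCompound (A t) k α γ * mulCompound (Φ t) k γ β) 0 :=
      HasDerivAt.fun_sum fun γ _ => (h4 γ).mul_const _
    have hDV : D V = ∑ γ, addCompound (A t) k α γ * mulCompound (Φ t) k γ β :=
      h2.unique h6
    have : (addCompound (A t) k * mulCompound (Φ t) k) α β
        = ∑ γ, addCompound (A t) k α γ * mulCompound (Φ t) k γ β := Matrix.mul_apply
    rw [this, ← hDV]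
    exact h1
  · rw [hΦa, mulCompound_one]
end

section
/- For A ∈ ℝ^{n×n}, the L∞-matrix measure of the k-additive compound satisfies μ_∞(A^{[k]}) = max over α ∈ Q(k,n) of [ Σ_{p=1}^k a_{α_p α_p} + Σ_{j ∉ α} ( |a_{α_1 j}| + ⋯ + |a_{α_k j}| ) ]. -/
open Matrix

/-- The matrix measure induced by the `L∞` vector norm:
`μ∞(B) = max_i (b_{ii} + Σ_{j ≠ i} |b_{ij}|)`. -/
noncomputable def muInfty {ι : Type*} [Fintype ι] [DecidableEq ι] (B : Matrix ι ι ℝ) : ℝ :=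
  ⨆ i, (B i i + ∑ j ∈ Finset.univ.erase i, |B i j|)

section Aux

variable {n k : ℕ} (A : Matrix (Fin n) (Fin n) ℝ)
  (α β : {s : Finset (Fin n) // s.card = k})

/-- a permutation agreeing with another off one point agrees everywhere -/
lemma perm_eq_of_eq_off (σ τ : Equiv.Perm (Fin k)) (q : Fin k)
    (h : ∀ p, p ≠ q → σ p = τ p) : σ = τ := by
  refine Equiv.ext fun p => ?_
  rcases eq_or_ne p q with rfl | hp
  · obtain ⟨r, hr⟩ := τ.surjective (σ p)
    rcases eq_or_ne r p with rfl | hrp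
    · exact hr.symm
    · exfalso
      have := h r hrp
      rw [hr] at this
      exact hrp (σ.injective this)
  · exact h p hp

/-- Leibniz-type formula for the additive compound entries. -/
lemma addCompound_eq_sum :
    addCompound A k α β =
      ∑ σ : Equiv.Perm (Fin k), ((Equiv.Perm.sign σ : ℤ) : ℝ) *
        ∑ q : Fin k,
          (∏ p ∈ Finset.univ.erase q,
            (if α.1.orderEmbOfFin α.2 (σ p) = β.1.orderEmbOfFin β.2 p then (1:ℝ) else 0)) *
          A (α.1.orderEmbOfFin α.2 (σ q)) (β.1.orderEmbOfFin β.2 q) := by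
  classical
  set ea := α.1.orderEmbOfFin α.2 with hea
  set eb := β.1.orderEmbOfFin β.2 with heb
  have hF : ∀ i j : Fin n, HasDerivAt (fun ε : ℝ => (1 + ε • A) i j) (A i j) 0 := by
    intro i j
    have hfun : (fun ε : ℝ => (1 + ε • A) i j)
        = fun ε : ℝ => (1 : Matrix (Fin n) (Fin n) ℝ) i j + ε * A i j := by
      funext ε
      simp [Matrix.add_apply, Matrix.smul_apply, smul_eq_mul]
    rw [hfun]
    simpa using (hasDerivAt_mul_const (A i j)).const_add ((1 : Matrix (Fin n) (Fin n) ℝ) i j)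
  have key : HasDerivAt (fun ε : ℝ => mulCompound (1 + ε • A) k α β)
      (∑ σ : Equiv.Perm (Fin k), ((Equiv.Perm.sign σ : ℤ) : ℝ) *
        ∑ q : Fin k,
          (∏ p ∈ Finset.univ.erase q, (if ea (σ p) = eb p then (1:ℝ) else 0)) *
          A (ea (σ q)) (eb q)) 0 := by
    have hfun : (fun ε : ℝ => mulCompound (1 + ε • A) k α β)
        = fun ε : ℝ => ∑ σ : Equiv.Perm (Fin k), ((Equiv.Perm.sign σ : ℤ) : ℝ) *
            ∏ p : Fin k, (1 + ε • A) (ea (σ p)) (eb p) := by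
      funext ε
      simp [mulCompound, Matrix.det_apply', Matrix.submatrix_apply, hea, heb]
    rw [hfun]
    refine HasDerivAt.fun_sum fun σ _ => ?_
    have hprod := HasDerivAt.fun_finsetProd (u := (Finset.univ : Finset (Fin k)))
      (f := fun p ε => (1 + ε • A) (ea (σ p)) (eb p))
      (f' := fun p => A (ea (σ p)) (eb p)) (x := (0:ℝ)) (fun p _ => hF _ _)
    have h2 := hprod.const_mul (((Equiv.Perm.sign σ : ℤ) : ℝ))
    simp only [Matrix.add_apply, Matrix.one_apply, Matrix.smul_apply, smul_eq_mul,
      zero_mul, add_zero] at h2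
    simpa [Matrix.one_apply] using h2
  simpa [addCompound] using key.deriv

/-- Diagonal entries of the additive compound. -/
lemma addCompound_diag :
    addCompound A k α α = ∑ p : Fin k, A (α.1.orderEmbOfFin α.2 p) (α.1.orderEmbOfFin α.2 p) := by
  classical
  rw [addCompound_eq_sum]
  set ea := α.1.orderEmbOfFin α.2 with hea
  rw [Finset.sum_eq_single (1 : Equiv.Perm (Fin k))]
  · simp
  · intro σ _ hσ
    have hzero : ∀ q : Fin k,
        (∏ p ∈ Finset.univ.erase q, (if ea (σ p) = ea p then (1:ℝ) else 0)) = 0 := by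
      intro q
      obtain ⟨r, hr⟩ : ∃ r, σ r ≠ r := by
        by_contra h
        push_neg at h
        exact hσ (Equiv.ext h)
      rcases eq_or_ne r q with rfl | hrq
      · -- take p := σ r, which is ≠ r and moved
        have h1 : σ r ≠ r := hr
        have h2 : σ (σ r) ≠ σ r := by
          intro h
          exact hr (σ.injective h)
        refine Finset.prod_eq_zero (Finset.mem_erase.2 ⟨h1, Finset.mem_univ _⟩) ?_
        rw [if_neg]
        exact fun h => h2 ((α.1.orderEmbOfFin α.2).injective h)
      · refine Finset.prod_eq_zero (Finset.mem_erase.2 ⟨hrq, Finset.mem_univ _⟩) ?_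
        rw [if_neg]
        exact fun h => hr ((α.1.orderEmbOfFin α.2).injective h)
    simp only [hzero, zero_mul, Finset.sum_const_zero, mul_zero]
  · intro h
    exact absurd (Finset.mem_univ _) h

end Aux

section OffDiag

variable {n k : ℕ} (A : Matrix (Fin n) (Fin n) ℝ)
  (α : {s : Finset (Fin n) // s.card = k})

/-- Vanishing of entries not adjacent to α. -/
lemma addCompound_eq_zero (β : {s : Finset (Fin n) // s.card = k}) (hne : β ≠ α)
    (hnb : ∀ j ∈ Finset.univ \ α.1, ∀ p : Fin k,
      β.1 ≠ insert j (α.1.erase (α.1.orderEmbOfFin α.2 p))) :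
    addCompound A k α β = 0 := by
  classical
  rw [addCompound_eq_sum]
  set ea := α.1.orderEmbOfFin α.2 with hea
  set eb := β.1.orderEmbOfFin β.2 with heb
  refine Finset.sum_eq_zero fun σ _ => ?_
  rw [mul_eq_zero]; right
  refine Finset.sum_eq_zero fun q _ => ?_
  rw [mul_eq_zero]; left
  by_contra hprod
  have hdel : ∀ p, p ≠ q → ea (σ p) = eb p := by
    intro p hp
    by_contra h
    exact hprod (Finset.prod_eq_zero (Finset.mem_erase.2 ⟨hp, Finset.mem_univ _⟩) (if_neg h))
  -- every element of β is in the range of eb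
  have hrange : ∀ x ∈ β.1, ∃ p : Fin k, eb p = x := by
    intro x hx
    have : x ∈ Set.range eb := by
      rw [heb, Finset.range_orderEmbOfFin]; exact hx
    exact this
  have hrangea : ∀ x ∈ α.1, ∃ p : Fin k, ea p = x := by
    intro x hx
    have : x ∈ Set.range ea := by
      rw [hea, Finset.range_orderEmbOfFin]; exact hx
    exact this
  -- eb q ∉ α
  have hq_notin : eb q ∉ α.1 := by
    intro hqin
    have hsub : β.1 ⊆ α.1 := by
      intro x hx
      obtain ⟨p, rfl⟩ := hrange x hx
      rcases eq_or_ne p q with rfl | hp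
      · exact hqin
      · rw [← hdel p hp]; exact Finset.orderEmbOfFin_mem _ _ _
    exact hne (Subtype.ext (Finset.eq_of_subset_of_card_le hsub (by rw [α.2, β.2])))
  -- S := β \ {eb q} ⊆ α
  set S := β.1.erase (eb q) with hS
  have hSsub : S ⊆ α.1 := by
    intro x hx
    obtain ⟨hx1, hx2⟩ := Finset.mem_erase.1 hx
    obtain ⟨p, rfl⟩ := hrange x hx2
    have hp : p ≠ q := fun h => hx1 (by rw [h])
    rw [← hdel p hp]; exact Finset.orderEmbOfFin_mem _ _ _
  have hScard : S.card = k - 1 := by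
    rw [hS, Finset.card_erase_of_mem (Finset.orderEmbOfFin_mem _ _ _), β.2]
  have hk1 : 1 ≤ k := q.pos
  have hTcard : (α.1 \ S).card = 1 := by
    rw [Finset.card_sdiff_of_subset hSsub, α.2, hScard]
    omega
  obtain ⟨i, hi⟩ := Finset.card_eq_one.1 hTcard
  have hiα : i ∈ α.1 := by
    have : i ∈ α.1 \ S := by rw [hi]; exact Finset.mem_singleton_self i
    exact (Finset.mem_sdiff.1 this).1
  obtain ⟨p₀, hp₀⟩ := hrangea i hiα
  have hSerase : α.1.erase i = S := by
    rw [Finset.erase_eq, ← hi, sdiff_sdiff_eq_self hSsub]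
  have hβeq : β.1 = insert (eb q) (α.1.erase (ea p₀)) := by
    rw [hp₀, hSerase, hS, Finset.insert_erase (Finset.orderEmbOfFin_mem _ _ _)]
  exact hnb (eb q) (Finset.mem_sdiff.2 ⟨Finset.mem_univ _, hq_notin⟩) p₀ hβeq

/-- Value of entries adjacent to α. -/
lemma abs_addCompound_adjacent (j : Fin n) (hj : j ∉ α.1) (p₀ : Fin k)
    (β : {s : Finset (Fin n) // s.card = k})
    (hβ : β.1 = insert j (α.1.erase (α.1.orderEmbOfFin α.2 p₀))) :
    |addCompound A k α β| = |A (α.1.orderEmbOfFin α.2 p₀) j| := by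
  classical
  rw [addCompound_eq_sum]
  set ea := α.1.orderEmbOfFin α.2 with hea
  set eb := β.1.orderEmbOfFin β.2 with heb
  have hrange : ∀ x ∈ β.1, ∃ p : Fin k, eb p = x := by
    intro x hx
    have : x ∈ Set.range eb := by
      rw [heb, Finset.range_orderEmbOfFin]; exact hx
    exact this
  have hp₀mem : ea p₀ ∈ α.1 := Finset.orderEmbOfFin_mem _ _ _
  -- q₀ : index of j in β
  obtain ⟨q₀, hq₀⟩ := hrange j (by rw [hβ]; exact Finset.mem_insert_self _ _)
  -- the function h
  set h : Fin k → Fin n := fun p => if p = q₀ then ea p₀ else eb p with hh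
  have hhq : h q₀ = ea p₀ := if_pos rfl
  have hhp : ∀ p, p ≠ q₀ → h p = eb p := fun p hp => if_neg hp
  have hmem : ∀ p, h p ∈ α.1 := by
    intro p
    rcases eq_or_ne p q₀ with rfl | hp
    · rw [hhq]; exact hp₀mem
    · rw [hhp p hp]
      have hpβ : eb p ∈ β.1 := Finset.orderEmbOfFin_mem _ _ _
      rw [hβ] at hpβ
      rcases Finset.mem_insert.1 hpβ with h1 | h1
      · exact absurd (eb.injective (h1.trans hq₀.symm)) hp
      · exact Finset.mem_of_mem_erase h1
  have haux : ∀ p, p ≠ q₀ → h p ≠ ea p₀ := by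
    intro p hp hcon
    rw [hhp p hp] at hcon
    have hpβ : eb p ∈ β.1 := Finset.orderEmbOfFin_mem _ _ _
    rw [hβ] at hpβ
    rcases Finset.mem_insert.1 hpβ with h1 | h1
    · exact hp (eb.injective (h1.trans hq₀.symm))
    · rw [hcon] at h1
      exact (Finset.notMem_erase _ _) h1
  have hinj : Function.Injective h := by
    intro p p' hpp
    by_cases hp : p = q₀ <;> by_cases hp' : p' = q₀
    · rw [hp, hp']
    · subst hp
      exact ((haux p' hp') (hpp.symm.trans hhq)).elim
    · subst hp'
      exact ((haux p hp) (hpp.trans hhq)).elim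
    · rw [hhp p hp, hhp p' hp'] at hpp
      exact eb.injective hpp
  -- σ₀ : the unique contributing permutation
  set f : Fin k → Fin k := fun p => (α.1.orderIsoOfFin α.2).symm ⟨h p, hmem p⟩ with hf
  have hfinj : Function.Injective f := by
    intro p p' hpp
    rw [hf] at hpp
    have := (α.1.orderIsoOfFin α.2).symm.injective hpp
    exact hinj (congrArg Subtype.val this)
  set σ₀ : Equiv.Perm (Fin k) := Equiv.ofBijective f
    ((Finite.injective_iff_bijective).1 hfinj) with hσ₀
  have hea_iso : ∀ p : Fin k, ea p = ↑(α.1.orderIsoOfFin α.2 p) := by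
    intro p
    rw [hea, Finset.coe_orderIsoOfFin_apply]
  have hσ₀app : ∀ p, ea (σ₀ p) = h p := by
    intro p
    rw [hσ₀]
    rw [hea_iso]
    show ((α.1.orderIsoOfFin α.2) ((α.1.orderIsoOfFin α.2).symm ⟨h p, hmem p⟩) : Fin n) = h p
    rw [OrderIso.apply_symm_apply]
  have hσ₀q₀ : σ₀ q₀ = p₀ := by
    have h1 : ea (σ₀ q₀) = ea p₀ := by rw [hσ₀app, hhq]
    exact ea.injective h1
  have hjα : j ∉ Finset.image ea Finset.univ := by
    intro hmem'
    obtain ⟨p, _, hp⟩ := Finset.mem_image.1 hmem'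
    rw [hea] at hp
    exact hj (hp ▸ Finset.orderEmbOfFin_mem _ _ _)
  -- evaluate sum
  rw [Finset.sum_eq_single σ₀]
  · rw [Finset.sum_eq_single q₀]
    · have hall : ∀ p ∈ Finset.univ.erase q₀,
          (if ea (σ₀ p) = eb p then (1:ℝ) else 0) = 1 := by
        intro p hp
        have hpne := (Finset.mem_erase.1 hp).1
        rw [if_pos]
        rw [hσ₀app, hhp p hpne]
      rw [Finset.prod_congr rfl hall, Finset.prod_const_one, one_mul, hσ₀q₀, hq₀]
      rw [abs_mul]
      have := Int.units_eq_one_or (Equiv.Perm.sign σ₀)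
      rcases this with h1 | h1 <;> rw [h1] <;> norm_num
    · intro q _ hq
      rw [mul_eq_zero]; left
      refine Finset.prod_eq_zero (Finset.mem_erase.2 ⟨Ne.symm hq, Finset.mem_univ q₀⟩) ?_
      rw [if_neg]
      intro hcon
      rw [hσ₀app, hhq, hq₀] at hcon
      exact hj (hcon ▸ hp₀mem)
    · intro hq; exact absurd (Finset.mem_univ _) hq
  · intro σ _ hσ
    rw [mul_eq_zero]; right
    refine Finset.sum_eq_zero fun q _ => ?_
    rw [mul_eq_zero]; left
    by_contra hprod
    have hdel : ∀ p, p ≠ q → ea (σ p) = eb p := by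
      intro p hp
      by_contra hcon
      exact hprod (Finset.prod_eq_zero (Finset.mem_erase.2 ⟨hp, Finset.mem_univ _⟩) (if_neg hcon))
    have hqq₀ : q = q₀ := by
      by_contra hqq
      have := hdel q₀ (fun hc => hqq hc.symm)
      rw [hq₀] at this
      exact hj (this ▸ Finset.orderEmbOfFin_mem _ _ _)
    subst hqq₀
    have hσeq : σ = σ₀ := by
      refine perm_eq_of_eq_off σ σ₀ q ?_
      intro p hp
      have h1 : ea (σ p) = eb p := hdel p hp
      have h2 : ea (σ₀ p) = eb p := by rw [hσ₀app, hhp p hp]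
      exact ea.injective (h1.trans h2.symm)
    exact hσ hσeq
  · intro hσ; exact absurd (Finset.mem_univ _) hσ

end OffDiag

/-- Explicit formula for `μ∞(A^{[k]})`. -/
theorem muInfty_addCompound {n : ℕ} (A : Matrix (Fin n) (Fin n) ℝ) (k : ℕ)
    (hk1 : 1 ≤ k) (hk : k ≤ n) :
    muInfty (addCompound A k) =
      ⨆ α : {s : Finset (Fin n) // s.card = k},
        (∑ p : Fin k, A (α.1.orderEmbOfFin α.2 p) (α.1.orderEmbOfFin α.2 p) +
          ∑ j ∈ Finset.univ \ α.1, ∑ p : Fin k, |A (α.1.orderEmbOfFin α.2 p) j|) := by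
  classical
  rw [muInfty]
  refine iSup_congr fun α => ?_
  rw [addCompound_diag]
  congr 1
  set ea := α.1.orderEmbOfFin α.2 with hea
  have huniq : ∀ j ∈ Finset.univ \ α.1, ∀ p : Fin k, ∀ j' ∈ Finset.univ \ α.1, ∀ p' : Fin k,
      insert j (α.1.erase (ea p)) = insert j' (α.1.erase (ea p')) → j = j' ∧ p = p' := by
    intro j hj p j' hj' p' hset
    have hjα : j ∉ α.1 := (Finset.mem_sdiff.1 hj).2
    have hj'α : j' ∉ α.1 := (Finset.mem_sdiff.1 hj').2
    have hjj : j = j' := by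
      have : j ∈ insert j' (α.1.erase (ea p')) := hset ▸ Finset.mem_insert_self _ _
      rcases Finset.mem_insert.1 this with h1 | h1
      · exact h1
      · exact absurd (Finset.mem_of_mem_erase h1) hjα
    subst hjj
    have her : α.1.erase (ea p) = α.1.erase (ea p') := by
      have key : ∀ (r r' : Fin k), insert j (α.1.erase (ea r)) = insert j (α.1.erase (ea r')) →
          α.1.erase (ea r) ⊆ α.1.erase (ea r') := by
        intro r r' hrr x hx
        have : x ∈ insert j (α.1.erase (ea r')) := hrr ▸ Finset.mem_insert_of_mem hx
        rcases Finset.mem_insert.1 this with h1 | h1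
        · exact absurd (h1 ▸ Finset.mem_of_mem_erase hx) hjα
        · exact h1
      exact Finset.Subset.antisymm (key p p' hset) (key p' p hset.symm)
    have hpp : ea p = ea p' := by
      by_contra hcon
      have h1 : ea p ∈ α.1.erase (ea p') :=
        Finset.mem_erase.2 ⟨hcon, Finset.orderEmbOfFin_mem _ _ _⟩
      rw [← her] at h1
      exact (Finset.notMem_erase _ _) h1
    exact ⟨rfl, ea.injective hpp⟩
  have hcard : ∀ j ∈ Finset.univ \ α.1, ∀ p : Fin k,
      (insert j (α.1.erase (ea p))).card = k := by
    intro j hj p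
    have hjα : j ∉ α.1 := (Finset.mem_sdiff.1 hj).2
    rw [Finset.card_insert_of_notMem (fun hc => hjα (Finset.mem_of_mem_erase hc)),
      Finset.card_erase_of_mem (Finset.orderEmbOfFin_mem _ _ _), α.2]
    omega
  have hpt : ∀ β ∈ Finset.univ.erase α, |addCompound A k α β|
      = ∑ j ∈ Finset.univ \ α.1, ∑ p : Fin k,
          (if β.1 = insert j (α.1.erase (ea p)) then |A (ea p) j| else 0) := by
    intro β hβ
    have hβne : β ≠ α := (Finset.mem_erase.1 hβ).1
    by_cases hex : ∃ j ∈ Finset.univ \ α.1, ∃ p : Fin k, β.1 = insert j (α.1.erase (ea p))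
    · obtain ⟨j, hjmem, p, hbp⟩ := hex
      rw [abs_addCompound_adjacent A α j (Finset.mem_sdiff.1 hjmem).2 p β hbp]
      rw [Finset.sum_eq_single j]
      · rw [Finset.sum_eq_single p]
        · rw [if_pos hbp]
        · intro p' _ hp'
          rw [if_neg]
          intro hcon
          exact hp' (huniq j hjmem p' j hjmem p (hcon.symm.trans hbp)).2
        · intro hp; exact absurd (Finset.mem_univ p) hp
      · intro j' hj' hjj'
        refine Finset.sum_eq_zero fun p' _ => ?_
        rw [if_neg]
        intro hcon
        exact hjj' (huniq j' hj' p' j hjmem p (hcon.symm.trans hbp)).1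
      · intro hj; exact absurd hjmem hj
    · push_neg at hex
      rw [addCompound_eq_zero A α β hβne (fun j hj p => hex j hj p), abs_zero]
      symm
      exact Finset.sum_eq_zero fun j hj => Finset.sum_eq_zero fun p _ => if_neg (hex j hj p)
  rw [Finset.sum_congr rfl hpt, Finset.sum_comm]
  refine Finset.sum_congr rfl fun j hj => ?_
  rw [Finset.sum_comm]
  refine Finset.sum_congr rfl fun p _ => ?_
  have hBmem : (⟨insert j (α.1.erase (ea p)), hcard j hj p⟩ :
      {s : Finset (Fin n) // s.card = k}) ∈ Finset.univ.erase α := by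
    refine Finset.mem_erase.2 ⟨?_, Finset.mem_univ _⟩
    intro hc
    have : j ∈ α.1 := by
      rw [← congrArg Subtype.val hc]
      exact Finset.mem_insert_self _ _
    exact (Finset.mem_sdiff.1 hj).2 this
  rw [Finset.sum_eq_single (⟨insert j (α.1.erase (ea p)), hcard j hj p⟩ :
      {s : Finset (Fin n) // s.card = k})]
  · rw [if_pos rfl]
  · intro β _ hβne
    exact if_neg fun hc => hβne (Subtype.ext hc)
  · intro hB; exact absurd hBmem hB
end

section
/- Let A ∈ ℝ^{n×n} be nonsingular and k ∈ {1,…,n}. The following are equivalent: (i) for every x ∈ ℝ^n \ {0} with s^-(x) ≤ k−1, one has s^+(Ax) ≤ k−1; (ii) A is strictly sign-regular of order k, i.e., all k×k minors of A are positive, or all are negative. -/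
open Matrix

/-- Number of sign changes in a list of reals (consecutive pairs of opposite sign). -/
noncomputable def signChanges : List ℝ → ℕ
  | [] => 0
  | [_] => 0
  | a :: b :: rest => (if a * b < 0 then 1 else 0) + signChanges (b :: rest)

/-- `s⁻(x)`: the number of sign variations in `x` after deleting its zero entries
(`s⁻(0) = 0`). -/
noncomputable def sminus {n : ℕ} (x : Fin n → ℝ) : ℕ :=
  signChanges ((List.ofFn x).filter (fun a => a ≠ 0))

/-- `s⁺(x)`: the maximal possible number of sign variations in `x` after setting every zero
entry of `x` to either `+1` or `-1`. -/
noncomputable def splus {n : ℕ} (x : Fin n → ℝ) : ℕ :=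
  sSup { m | ∃ y : Fin n → ℝ, (∀ i, x i ≠ 0 → y i = x i) ∧
      (∀ i, x i = 0 → y i = 1 ∨ y i = -1) ∧ m = signChanges (List.ofFn y) }

set_option maxHeartbeats 1000000

lemma signChanges_nil : signChanges [] = 0 := rfl
lemma signChanges_singleton (a : ℝ) : signChanges [a] = 0 := rfl
lemma signChanges_cons_cons (a b : ℝ) (l : List ℝ) :
    signChanges (a :: b :: l) = (if a * b < 0 then 1 else 0) + signChanges (b :: l) := rfl

lemma sign_trans {a b c : ℝ} (h1 : 0 < a * b) (h2 : 0 < b * c) : 0 < a * c := by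
  nlinarith [mul_pos h1 h2, sq_nonneg b, sq_nonneg (a*c)]

lemma signChanges_cons (a : ℝ) (l : List ℝ) (hl : l ≠ []) :
    signChanges (a :: l) = (if a * l.headI < 0 then 1 else 0) + signChanges l := by
  cases l with
  | nil => simp at hl
  | cons b r => rfl

lemma signChanges_le (l : List ℝ) : signChanges l ≤ l.length - 1 := by
  induction l with
  | nil => simp [signChanges_nil]
  | cons a l ih =>
    cases l with
    | nil => simp [signChanges_singleton]
    | cons b r =>
      rw [signChanges_cons_cons]
      simp only [List.length_cons] at ih ⊢
      split_ifs <;> omega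

lemma le_signChanges_cons (a : ℝ) (l : List ℝ) : signChanges l ≤ signChanges (a :: l) := by
  cases l with
  | nil => simp [signChanges_nil]
  | cons b r => rw [signChanges_cons_cons]; omega

/-- extraction of an alternating sublist realizing the number of sign changes -/
lemma exists_chain_sublist (l : List ℝ) (h0 : ∀ a ∈ l, a ≠ 0) (hl : l ≠ []) :
    ∃ l', List.Sublist l' l ∧ l'.length = signChanges l + 1 ∧
      l'.Chain' (fun a b => a * b < 0) ∧ 0 < l'.headI * l.headI := by
  induction l with
  | nil => simp at hl
  | cons a l ih =>
    cases l with
    | nil =>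
      refine ⟨[a], List.Sublist.refl _, by simp [signChanges_singleton], List.isChain_singleton a, ?_⟩
      have := h0 a (by simp)
      simpa using mul_self_pos.mpr this
    | cons b r =>
      obtain ⟨l', hsub, hlen, hchain, hhead⟩ := ih (fun x hx => h0 x (by simp [hx] : x ∈ a :: b :: r)) (by simp)
      have hb : b ≠ 0 := h0 b (by simp)
      have ha : a ≠ 0 := h0 a (by simp)
      have hl'ne : l' ≠ [] := by
        intro h; rw [h] at hlen; simp at hlen
      by_cases hab : a * b < 0
      · refine ⟨a :: l', hsub.cons₂ a, ?_, ?_, ?_⟩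
        · simp [hlen, signChanges_cons_cons, hab]; omega
        · unfold List.Chain'; rw [List.isChain_cons]
          refine ⟨?_, hchain⟩
          intro y hy
          have : y = l'.headI := by
            cases l' with
            | nil => simp at hy
            | cons c r' => simp at hy; simp [hy]
          subst this
          -- 0 < l'.headI * b, a * b < 0 ⇒ a * l'.headI < 0
          have h1 : 0 < l'.headI * b := by simpa using hhead
          nlinarith [mul_pos h1 h1, sq_nonneg b]
        · simpa using mul_self_pos.mpr ha
      · refine ⟨l', hsub.cons a, ?_, hchain, ?_⟩
        · simp [hlen, signChanges_cons_cons, hab]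
        · -- 0 < l'.headI * b and a*b ≥ 0 with a,b ≠ 0 ⇒ 0 < l'.headI * a
          have h1 : 0 < l'.headI * b := by simpa using hhead
          have hab' : 0 < a * b := by
            rcases lt_or_gt_of_ne (mul_ne_zero ha hb) with h | h
            · exact absurd h hab
            · exact h
          simp only [List.headI]
          exact sign_trans h1 (by linarith [hab'] : 0 < b * a)
  
/-- signChanges of an alternating chain is length - 1 -/
lemma signChanges_of_chain (l : List ℝ) (h : l.Chain' (fun a b => a * b < 0)) :
    signChanges l = l.length - 1 := by
  induction l with
  | nil => simp [signChanges_nil]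
  | cons a l ih =>
    cases l with
    | nil => simp [signChanges_singleton]
    | cons b r =>
      unfold List.Chain' at h; rw [List.isChain_cons_cons] at h
      rw [signChanges_cons_cons, ih h.2, if_pos h.1]
      simp
      omega

/-- monotonicity of signChanges under sublists, in zero-free ambient lists -/
lemma signChanges_sublist {l₁ l₂ : List ℝ} (h : List.Sublist l₁ l₂) (h0 : ∀ a ∈ l₂, a ≠ 0) :
    signChanges l₁ ≤ signChanges l₂ ∧
      ∀ a : ℝ, a ≠ 0 → signChanges (a :: l₁) ≤ signChanges (a :: l₂) := by
  induction h with
  | slnil => exact ⟨le_refl _, fun a _ => le_refl _⟩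
  | @cons l₁ l₂ b h ih =>
    have h0' : ∀ a ∈ l₂, a ≠ 0 := fun a ha => h0 a (by simp [ha])
    obtain ⟨ih1, ih2⟩ := ih h0'
    have hb : b ≠ 0 := h0 b (by simp)
    constructor
    · exact ih1.trans (le_signChanges_cons b l₂)
    · intro a ha
      refine (ih2 a ha).trans ?_
      -- signChanges (a :: l₂) ≤ signChanges (a :: b :: l₂)
      cases l₂ with
      | nil => simp [signChanges_singleton, signChanges_cons_cons]
      | cons c r =>
        have hc : c ≠ 0 := h0' c (by simp)
        rw [signChanges_cons_cons, signChanges_cons_cons, signChanges_cons_cons]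
        have : (if a * c < 0 then 1 else 0) ≤ (if a * b < 0 then 1 else 0) + (if b * c < 0 then 1 else 0) := by
          by_cases h1 : a * c < 0
          · by_cases h2 : a * b < 0
            · simp [h1, h2]
            · by_cases h3 : b * c < 0
              · simp [h1, h2, h3]
              · exfalso
                have hab : 0 < a * b := by
                  rcases lt_or_gt_of_ne (mul_ne_zero ha hb) with h' | h'
                  exacts [absurd h' h2, h']
                have hbc : 0 < b * c := by
                  rcases lt_or_gt_of_ne (mul_ne_zero hb hc) with h' | h'
                  exacts [absurd h' h3, h']
                exact absurd (sign_trans hab hbc) (not_lt.mpr h1.le)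
          · simp [h1]
        omega
  | @cons_cons l₁ l₂ b h ih =>
    have h0' : ∀ a ∈ l₂, a ≠ 0 := fun a ha => h0 a (by simp [ha])
    obtain ⟨ih1, ih2⟩ := ih h0'
    have hb : b ≠ 0 := h0 b (by simp)
    refine ⟨ih2 b hb, fun a ha => ?_⟩
    rw [signChanges_cons (a := a) (l := b :: l₁) (by simp), signChanges_cons (a := a) (l := b :: l₂) (by simp)]
    simp only [List.headI]
    exact Nat.add_le_add_left (ih2 b hb) _

/-- sum formula -/
lemma signChanges_eq_sum (l : List ℝ) :
    signChanges l = ∑ m ∈ Finset.range (l.length - 1),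
      (if l.getD m 0 * l.getD (m+1) 0 < 0 then 1 else 0) := by
  induction l with
  | nil => simp [signChanges_nil]
  | cons a l ih =>
    cases l with
    | nil => simp [signChanges_singleton]
    | cons b r =>
      rw [signChanges_cons_cons, ih]
      have hlen : (a :: b :: r).length - 1 = ((b :: r).length - 1) + 1 := by simp
      rw [hlen, Finset.sum_range_succ']
      simp only [List.getD_cons_succ, List.getD_cons_zero]
      omega

section Algebra

lemma alt_mul_neg {ε : ℝ} (hε : ε * ε = 1) (m : ℕ) (a b : ℝ)
    (h1 : 0 < ε * (-1)^m * a) (h2 : 0 < ε * (-1)^(m+1) * b) : a * b < 0 := by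
  have hc : (-1:ℝ)^m * (-1)^m = 1 := by
    rw [← pow_add, ← two_mul, pow_mul]; norm_num
  have hprod : (ε * (-1)^m * a) * (ε * (-1)^(m+1) * b)
      = -(a*b) * ((ε*ε) * ((-1)^m * (-1)^m)) := by ring
  rw [hε, hc, mul_one, mul_one] at hprod
  nlinarith [mul_pos h1 h2]

lemma alt_next {ε : ℝ} (hε : ε * ε = 1) (m : ℕ) (a b : ℝ)
    (h1 : 0 < ε * (-1)^m * a) (h2 : a * b < 0) : 0 < ε * (-1)^(m+1) * b := by
  have hc : (-1:ℝ)^m * (-1)^m = 1 := by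
    rw [← pow_add, ← two_mul, pow_mul]; norm_num
  by_contra hle
  push_neg at hle
  have hprod : (ε * (-1)^m * a) * (ε * (-1)^(m+1) * b)
      = -(a*b) * ((ε*ε) * ((-1)^m * (-1)^m)) := by ring
  rw [hε, hc, mul_one, mul_one] at hprod
  nlinarith [mul_nonpos_of_nonneg_of_nonpos h1.le hle]

lemma alt_of_chain {k : ℕ} (w : Fin (k+1) → ℝ) (h0 : ∀ j, w j ≠ 0)
    (hch : ∀ i : ℕ, (h : i < k) → w ⟨i, by omega⟩ * w ⟨i+1, by omega⟩ < 0) :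
    ∃ ε : ℝ, (ε = 1 ∨ ε = -1) ∧ ∀ j : Fin (k+1), 0 < ε * (-1)^(j:ℕ) * w j := by
  set ε : ℝ := if 0 < w ⟨0, by omega⟩ then 1 else -1 with hεdef
  have hεor : ε = 1 ∨ ε = -1 := by unfold ε; split_ifs <;> simp
  have hε2 : ε * ε = 1 := by rcases hεor with h | h <;> rw [h] <;> norm_num
  refine ⟨ε, hεor, ?_⟩
  have key : ∀ m : ℕ, (hm : m < k + 1) → 0 < ε * (-1)^m * w ⟨m, hm⟩ := by
    intro m
    induction m with
    | zero =>
      intro hm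
      unfold ε
      rcases lt_or_gt_of_ne (h0 ⟨0, hm⟩) with h | h
      · rw [if_neg (by exact not_lt.mpr h.le)]; simpa using h
      · rw [if_pos h]; simpa using h
    | succ m ih =>
      intro hm
      exact alt_next hε2 m _ _ (ih (by omega)) (hch m (by omega))
  intro j
  exact key j.1 j.2

end Algebra

section Bridges

variable {n : ℕ} (x : Fin n → ℝ)

/-- the filtered list of values equals the values along the sorted support -/
lemma filter_ofFn_eq {m : ℕ}
    (hm : (Finset.univ.filter (fun i => x i ≠ 0)).card = m) :
    (List.ofFn x).filter (fun a => a ≠ 0) =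
      List.ofFn (fun i : Fin m =>
        x ((Finset.univ.filter (fun i => x i ≠ 0)).orderEmbOfFin hm i)) := by
  set s := Finset.univ.filter (fun i => x i ≠ 0) with hs
  set e := s.orderEmbOfFin hm with he
  rw [List.ofFn_eq_map, List.filter_map]
  have hmem : ∀ i : Fin n, i ∈ List.ofFn ⇑e ↔ x i ≠ 0 := by
    intro i
    rw [List.mem_ofFn]
    constructor
    · rintro ⟨j, rfl⟩
      have : e j ∈ s := Finset.orderEmbOfFin_mem s hm j
      rw [hs] at this
      simpa using this
    · intro hi
      have h2 : i ∈ (s : Set (Fin n)) := by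
        rw [hs]; simpa using hi
      rw [← Finset.range_orderEmbOfFin s hm] at h2
      exact h2
  have key : (List.finRange n).filter ((fun a => decide (a ≠ 0)) ∘ x) = List.ofFn ⇑e := by
    refine (fun h1 h2 h3 => List.Perm.eq_of_pairwise' (r := (· ≤ ·)) h2 h3 h1) ?_ ?_ ?_
    · apply List.perm_of_nodup_nodup_toFinset_eq
      · exact (List.nodup_finRange n).filter _
      · exact ((List.pairwise_ofFn).mpr (fun i j hij => e.strictMono hij)).nodup
      · ext i
        simp only [List.toFinset_filter, List.mem_toFinset, List.mem_filter,
          List.mem_finRange, Function.comp, true_and, hmem i, decide_eq_true_eq,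
          Finset.mem_filter]
    · exact (((List.pairwise_lt_finRange n).filter _).imp (fun h => le_of_lt h))
    · exact ((List.pairwise_ofFn).mpr (fun i j hij => e.strictMono hij)).imp (fun h => le_of_lt h)
  rw [key, List.map_ofFn]
  rfl

lemma sminus_eq {m : ℕ} (hm : (Finset.univ.filter (fun i => x i ≠ 0)).card = m) :
    sminus x = signChanges (List.ofFn (fun i : Fin m =>
      x ((Finset.univ.filter (fun i => x i ≠ 0)).orderEmbOfFin hm i))) := by
  rw [sminus, filter_ofFn_eq x hm]

lemma sminus_le_card_sub_one {m : ℕ}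
    (h : (Finset.univ.filter (fun i => x i ≠ 0)).card ≤ m) : sminus x ≤ m - 1 := by
  have := sminus_eq x rfl
  rw [this]
  refine (signChanges_le _).trans ?_
  rw [List.length_ofFn]
  omega

lemma sminus_eq_of_support {m : ℕ} (γ : Fin m → Fin n) (hγ : StrictMono γ)
    (h1 : ∀ j, x (γ j) ≠ 0) (h2 : ∀ l, (∀ j, γ j ≠ l) → x l = 0) :
    sminus x = signChanges (List.ofFn (x ∘ γ)) := by
  have hsupp : Finset.univ.filter (fun i => x i ≠ 0) = Finset.image γ Finset.univ := by
    ext i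
    simp only [Finset.mem_filter, Finset.mem_univ, true_and, Finset.mem_image]
    constructor
    · intro hi
      by_contra hc
      push_neg at hc
      refine hi (h2 i (fun j hji => ?_))
      have := hc j
      tauto
    · rintro ⟨j, _, rfl⟩; exact h1 j
  have hcard : (Finset.univ.filter (fun i => x i ≠ 0)).card = m := by
    rw [hsupp, Finset.card_image_of_injective _ hγ.injective, Finset.card_univ, Fintype.card_fin]
  rw [sminus_eq x hcard]
  congr 1
  have : γ = (Finset.univ.filter (fun i => x i ≠ 0)).orderEmbOfFin hcard := by
    apply Finset.orderEmbOfFin_unique hcard _ hγ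
    intro j
    rw [hsupp]
    exact Finset.mem_image.mpr ⟨j, Finset.mem_univ j, rfl⟩
  rw [← this]
  rfl

/-- the defining set of splus -/
lemma splus_set_bddAbove : BddAbove { m | ∃ y : Fin n → ℝ, (∀ i, x i ≠ 0 → y i = x i) ∧
    (∀ i, x i = 0 → y i = 1 ∨ y i = -1) ∧ m = signChanges (List.ofFn y) } := by
  refine ⟨n, fun m hm => ?_⟩
  obtain ⟨y, _, _, rfl⟩ := hm
  refine (signChanges_le _).trans ?_
  rw [List.length_ofFn]
  omega

lemma splus_set_nonempty : Set.Nonempty { m | ∃ y : Fin n → ℝ, (∀ i, x i ≠ 0 → y i = x i) ∧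
    (∀ i, x i = 0 → y i = 1 ∨ y i = -1) ∧ m = signChanges (List.ofFn y) } := by
  refine ⟨signChanges (List.ofFn (fun i => if x i = 0 then 1 else x i)), ?_⟩
  refine ⟨_, fun i hi => by simp [hi], fun i hi => by simp [hi], rfl⟩

lemma splus_ge_iff {k : ℕ} (hn : 0 < n) (u : Fin n → ℝ) :
    k ≤ splus u ↔ ∃ ε : ℝ, ε ≠ 0 ∧ ∃ g : Fin (k+1) → Fin n, StrictMono g ∧
      ∀ j : Fin (k+1), 0 ≤ ε * (-1)^(j:ℕ) * u (g j) := by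
  constructor
  · intro hk
    have hmem := Nat.sSup_mem (splus_set_nonempty u) (splus_set_bddAbove u)
    rw [show sSup _ = splus u from rfl] at hmem
    obtain ⟨y, hy1, hy2, hy3⟩ := hmem
    have hy0 : ∀ i, y i ≠ 0 := by
      intro i
      by_cases h : u i = 0
      · rcases hy2 i h with h' | h' <;> rw [h'] <;> norm_num
      · rw [hy1 i h]; exact h
    have hksc : k ≤ signChanges (List.ofFn y) := hy3 ▸ hk
    have hne : List.ofFn y ≠ [] := by
      intro h
      have := congrArg List.length h
      rw [List.length_ofFn] at this
      simp at this
      omega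
    have h0l : ∀ a ∈ List.ofFn y, a ≠ 0 := by
      intro a ha
      rw [List.mem_ofFn] at ha
      obtain ⟨i, rfl⟩ := ha
      exact hy0 i
    obtain ⟨l', hsub, hlen, hchain, -⟩ := exists_chain_sublist _ h0l hne
    have hklen : k + 1 ≤ l'.length := by omega
    set l'' := l'.take (k+1) with hl''
    have hsub'' : List.Sublist l'' (List.ofFn y) := ((List.take_sublist _ _).trans hsub)
    have hlen'' : l''.length = k + 1 := by
      rw [hl'', List.length_take]
      omega
    have hchain'' : l''.Chain' (fun a b => a * b < 0) := hchain.take _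
    rw [List.sublist_iff_exists_fin_orderEmbedding_get_eq] at hsub''
    obtain ⟨f, hf⟩ := hsub''
    have hlofn : (List.ofFn y).length = n := List.length_ofFn (f := y)
    set g : Fin (k+1) → Fin n := fun j => Fin.cast hlofn (f (Fin.cast hlen''.symm j)) with hg
    have hgmono : StrictMono g := by
      intro a b hab
      simp only [hg, Fin.lt_def, Fin.coe_cast]
      exact f.strictMono (show (Fin.cast hlen''.symm a) < (Fin.cast hlen''.symm b) from hab)
    have hval : ∀ j : Fin (k+1), y (g j) = l''.get (Fin.cast hlen''.symm j) := by
      intro j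
      rw [hf, List.get_ofFn]
    set w : Fin (k+1) → ℝ := fun j => y (g j) with hw
    have hch : ∀ i : ℕ, (h : i < k) → w ⟨i, by omega⟩ * w ⟨i+1, by omega⟩ < 0 := by
      intro i hi
      have hc := List.isChain_iff_getElem.mp hchain'' i (by rw [hlen'']; omega)
      change l''.get ⟨i, _⟩ * l''.get ⟨i+1, _⟩ < 0 at hc
      rw [hw]
      simp only []
      rw [hval ⟨i, by omega⟩, hval ⟨i+1, by omega⟩]
      convert hc using 3
      all_goals exact Fin.ext rfl
    obtain ⟨ε, hεor, hεpos⟩ := alt_of_chain w (fun j => hy0 _) hch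
    refine ⟨ε, by rcases hεor with h|h <;> rw [h] <;> norm_num, g, hgmono, ?_⟩
    intro j
    by_cases h : u (g j) = 0
    · rw [h, mul_zero]
    · rw [← hy1 _ h]
      exact (hεpos j).le
  · rintro ⟨ε, hεne, g, hgmono, halt⟩
    set εs : ℝ := if 0 < ε then (1:ℝ) else -1 with hεs
    have hεs2 : εs * εs = 1 := by rw [hεs]; split_ifs <;> norm_num
    have hεsne : εs ≠ 0 := by rw [hεs]; split_ifs <;> norm_num
    have hsign : (εs = 1 ∨ εs = -1) := by rw [hεs]; split_ifs <;> simp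
    have halts : ∀ j : Fin (k+1), 0 ≤ εs * (-1)^(j:ℕ) * u (g j) := by
      intro j
      have h := halt j
      rw [mul_assoc] at h
      set z := (-1:ℝ)^(j:ℕ) * u (g j) with hz
      rw [hεs]
      rcases lt_or_gt_of_ne hεne with hε | hε
      · rw [if_neg (not_lt.mpr hε.le), mul_assoc, ← hz]
        nlinarith [h, hε]
      · rw [if_pos hε, mul_assoc, ← hz, one_mul]
        exact (mul_nonneg_iff_of_pos_left hε).mp h
    set y : Fin n → ℝ := fun i =>
      if u i ≠ 0 then u i else
        if h : ∃ j : Fin (k+1), g j = i then εs * (-1)^((h.choose : Fin (k+1)) : ℕ) else 1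
      with hy
    have hyvalid1 : ∀ i, u i ≠ 0 → y i = u i := fun i hi => by rw [hy]; simp [hi]
    have hyvalid2 : ∀ i, u i = 0 → y i = 1 ∨ y i = -1 := by
      intro i hi
      rw [hy]
      simp only [hi, ne_eq, not_true_eq_false, if_false]
      split_ifs with h
      · rcases hsign with h1 | h1 <;> rcases neg_one_pow_eq_or ℝ ((h.choose : Fin (k+1)) : ℕ) with h2 | h2 <;>
          rw [h1, h2] <;> norm_num
      · left; rfl
    have hy0 : ∀ i, y i ≠ 0 := by
      intro i
      by_cases h : u i = 0
      · rcases hyvalid2 i h with h' | h' <;> rw [h'] <;> norm_num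
      · rw [hyvalid1 i h]; exact h
    have hkey : ∀ j : Fin (k+1), 0 < εs * (-1)^(j:ℕ) * y (g j) := by
      intro j
      by_cases h : u (g j) = 0
      · have hex : ∃ j' : Fin (k+1), g j' = g j := ⟨j, rfl⟩
        have hcj : hex.choose = j := hgmono.injective hex.choose_spec
        have hyval : y (g j) = εs * (-1)^(j:ℕ) := by
          rw [hy]
          simp only [h, ne_eq, not_true_eq_false, if_false, dif_pos hex, hcj]
        rw [hyval]
        have : εs * (-1)^(j:ℕ) * (εs * (-1)^(j:ℕ)) = (εs*εs) * ((-1:ℝ)^(j:ℕ) * (-1)^(j:ℕ)) := by ring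
        rw [this, hεs2, one_mul, ← pow_add, ← two_mul, pow_mul]
        norm_num
      · have h0 : εs * (-1)^(j:ℕ) * u (g j) ≠ 0 :=
          mul_ne_zero (mul_ne_zero hεsne (pow_ne_zero _ (by norm_num))) h
        rw [hyvalid1 _ h]
        exact lt_of_le_of_ne (halts j) (Ne.symm h0)
    set w : Fin (k+1) → ℝ := fun j => y (g j) with hw
    have hsubl : List.Sublist (List.ofFn w) (List.ofFn y) := by
      have hpw : List.Pairwise (fun a b : Fin (List.ofFn y).length => (a:ℕ) < (b:ℕ))
          ((List.ofFn g).map (Fin.cast (List.length_ofFn (f := y)).symm)) := by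
        rw [List.pairwise_map, List.pairwise_ofFn]
        intro a b hab
        simpa using hgmono hab
      have hs := List.map_getElem_sublist hpw
      have heq : List.map (List.ofFn y).get ((List.ofFn g).map (Fin.cast (List.length_ofFn (f := y)).symm))
          = List.ofFn w := by
        rw [List.map_map, List.map_ofFn]
        congr 1
        funext j
        rw [Function.comp_apply, Function.comp_apply, List.get_ofFn]
        exact congrArg y (Fin.ext rfl)
      rw [← heq]
      exact hs
    have hc' : List.Chain' (fun a b => a * b < 0) (List.ofFn w) := by
      unfold List.Chain'; rw [List.isChain_iff_getElem]
      intro i hi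
      rw [List.length_ofFn] at hi
      rw [List.getElem_ofFn, List.getElem_ofFn]
      have hkk := alt_mul_neg hεs2 i (w ⟨i, by omega⟩) (w ⟨i+1, by omega⟩)
        (hkey ⟨i, by omega⟩) (hkey ⟨i+1, by omega⟩)
      convert hkk using 2
      all_goals exact Fin.ext rfl
    have hsc : signChanges (List.ofFn w) = k := by
      rw [signChanges_of_chain _ hc', List.length_ofFn]; omega
    have hmono := (signChanges_sublist hsubl (fun a ha => by
      rw [List.mem_ofFn] at ha; obtain ⟨i, rfl⟩ := ha; exact hy0 i)).1
    have hmem : signChanges (List.ofFn y) ∈ { m | ∃ y' : Fin n → ℝ,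
        (∀ i, u i ≠ 0 → y' i = u i) ∧ (∀ i, u i = 0 → y' i = 1 ∨ y' i = -1) ∧
        m = signChanges (List.ofFn y') } := ⟨y, hyvalid1, hyvalid2, rfl⟩
    have : k ≤ signChanges (List.ofFn y) := by omega
    exact this.trans (le_csSup (splus_set_bddAbove u) hmem)

end Bridges

section Det

/-- minors of a matrix of nonnegative block-combinations of columns -/
lemma det_blocks_pos {n k : ℕ} (A : Matrix (Fin n) (Fin n) ℝ) (s : ℝ)
    (hm : ∀ r c : Fin k → Fin n, StrictMono r → StrictMono c → 0 < s * (A.submatrix r c).det)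
    (t : Fin k → Fin n → ℝ) (ht0 : ∀ j l, 0 ≤ t j l) (htpos : ∀ j, ∃ l, 0 < t j l)
    (hord : ∀ (j j' : Fin k) (l l' : Fin n), j < j' → t j l ≠ 0 → t j' l' ≠ 0 → l < l')
    (r : Fin k → Fin n) (hr : StrictMono r) :
    0 < s * Matrix.det (Matrix.of fun i j => ∑ l, t j l * A (r i) l) := by
  have hdet : Matrix.det (Matrix.of fun i j => ∑ l, t j l * A (r i) l)
      = ∑ p : Fin k → Fin n, (∏ j, t j (p j)) * (A.submatrix r p).det := by
    have h0 : (Matrix.of fun i j => ∑ l, t j l * A (r i) l)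
        = (Matrix.of fun j i => ∑ l, t j l * A (r i) l).transpose := by
      funext i j; rfl
    rw [h0, Matrix.det_transpose]
    have hN : (Matrix.of fun j i => ∑ l, t j l * A (r i) l)
        = fun j => ∑ l : Fin n, t j l • (fun i => A (r i) l) := by
      funext j i
      rw [Finset.sum_apply]
      simp [smul_eq_mul]
    show Matrix.detRowAlternating _ = _
    rw [hN]
    have hms := (Matrix.detRowAlternating (R := ℝ) (n := Fin k)).toMultilinearMap.map_sum
      (g := fun (j : Fin k) (l : Fin n) => t j l • (fun i => A (r i) l))
    rw [show ((Matrix.detRowAlternating (R := ℝ) (n := Fin k)).toMultilinearMap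
        (fun j => ∑ l : Fin n, t j l • fun i => A (r i) l))
        = (Matrix.detRowAlternating (R := ℝ) (n := Fin k))
          (fun j => ∑ l : Fin n, t j l • fun i => A (r i) l) from rfl] at hms
    rw [hms]
    apply Finset.sum_congr rfl
    intro p _
    have hsm := (Matrix.detRowAlternating (R := ℝ) (n := Fin k)).toMultilinearMap.map_smul_univ
      (fun j => t j (p j)) (fun j => (fun i => A (r i) (p j)))
    calc (Matrix.detRowAlternating fun j => t j (p j) • fun i => A (r i) (p j))
        = (∏ i : Fin k, t i (p i)) • (Matrix.detRowAlternating fun j i => A (r i) (p j)) := hsm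
      _ = (∏ j, t j (p j)) * (A.submatrix r p).det := by
          rw [smul_eq_mul]
          congr 1
          rw [show (Matrix.detRowAlternating fun j i => A (r i) (p j))
            = ((A.submatrix r p).transpose).det from rfl, Matrix.det_transpose]
  rw [hdet, Finset.mul_sum]
  apply Finset.sum_pos'
  · intro p _
    by_cases hp : ∀ j, t j (p j) ≠ 0
    · have hmono : StrictMono p := fun a b hab => hord a b _ _ hab (hp a) (hp b)
      have h2 := hm r p hr hmono
      have hprod : 0 < ∏ j, t j (p j) :=
        Finset.prod_pos (fun j _ => lt_of_le_of_ne (ht0 _ _) (Ne.symm (hp j)))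
      have he : s * ((∏ j, t j (p j)) * (A.submatrix r p).det)
          = (∏ j, t j (p j)) * (s * (A.submatrix r p).det) := by ring
      rw [he]
      exact (mul_pos hprod h2).le
    · push_neg at hp
      obtain ⟨j, hj⟩ := hp
      have : ∏ j, t j (p j) = 0 := Finset.prod_eq_zero (Finset.mem_univ j) hj
      rw [this]
      simp
  · choose l hl using htpos
    refine ⟨l, Finset.mem_univ _, ?_⟩
    have hmono : StrictMono l := fun a b hab => hord a b _ _ hab (hl a).ne' (hl b).ne'
    have hprod : 0 < ∏ j, t j (l j) := Finset.prod_pos (fun j _ => hl j)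
    have h2 := hm r l hr hmono
    have he : s * ((∏ j, t j (l j)) * (A.submatrix r l).det)
        = (∏ j, t j (l j)) * (s * (A.submatrix r l).det) := by ring
    rw [he]
    exact mul_pos hprod h2

/-- the key variation-diminishing lemma -/
lemma key_VD {n k : ℕ} (W : Fin n → Fin k → ℝ) (s : ℝ)
    (hW : ∀ r : Fin k → Fin n, StrictMono r → 0 < s * Matrix.det (Matrix.of fun i j => W (r i) j))
    (c : Fin k → ℝ) (hc : c ≠ 0) (u : Fin n → ℝ) (hu : ∀ i, u i = ∑ j, c j * W i j)
    (ε : ℝ) (hε : ε ≠ 0) (g : Fin (k+1) → Fin n) (hg : StrictMono g)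
    (halt : ∀ j : Fin (k+1), 0 ≤ ε * (-1)^(j:ℕ) * u (g j)) : False := by
  set M : Matrix (Fin (k+1)) (Fin (k+1)) ℝ :=
    Matrix.of (fun i j => if h : (j:ℕ) < k then W (g i) ⟨(j:ℕ), h⟩ else u (g i)) with hM
  set v : Fin (k+1) → ℝ := fun j => if h : (j:ℕ) < k then -c ⟨(j:ℕ), h⟩ else 1 with hv
  have hdet0 : M.det = 0 := by
    rw [← Matrix.exists_mulVec_eq_zero_iff]
    refine ⟨v, ?_, ?_⟩
    · intro h
      have h2 := congrFun h (Fin.last k)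
      rw [hv] at h2
      simp only [Fin.val_last, lt_irrefl, dif_neg, Pi.zero_apply] at h2
      exact one_ne_zero h2
    · funext i
      show ∑ j, M i j * v j = 0
      rw [Fin.sum_univ_castSucc]
      have h1 : ∀ j : Fin k, M i (Fin.castSucc j) * v (Fin.castSucc j)
          = W (g i) j * (-c j) := by
        intro j
        have hlt : ((Fin.castSucc j : Fin (k+1)) : ℕ) < k := j.2
        rw [hM, hv]
        simp only [Matrix.of_apply, dif_pos hlt]
        congr 1
      have h2 : M i (Fin.last k) * v (Fin.last k) = u (g i) := by
        rw [hM, hv]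
        simp only [Matrix.of_apply, Fin.val_last, lt_irrefl, dif_neg, not_lt, mul_one]
        simp
      rw [h2, Finset.sum_congr rfl (fun j _ => h1 j), hu (g i)]
      rw [← Finset.sum_add_distrib]
      apply Finset.sum_eq_zero
      intro j _
      ring
  have hsub : ∀ i : Fin (k+1), (M.submatrix i.succAbove (Fin.last k).succAbove)
      = Matrix.of (fun i' j => W (g (i.succAbove i')) j) := by
    intro i
    funext i' j
    rw [Fin.succAbove_last]
    show M (i.succAbove i') (Fin.castSucc j) = _
    have hlt : ((Fin.castSucc j : Fin (k+1)) : ℕ) < k := j.2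
    rw [hM]
    simp only [Matrix.of_apply, dif_pos hlt]
    congr 1
  have hlastcol : ∀ i, M i (Fin.last k) = u (g i) := by
    intro i
    rw [hM]
    simp only [Matrix.of_apply, Fin.val_last, lt_irrefl, dif_neg, not_lt]
    simp
  set D : Fin (k+1) → ℝ := fun i => Matrix.det (Matrix.of fun i' j => W (g (i.succAbove i')) j)
    with hD
  have hDpos : ∀ i, 0 < s * D i := by
    intro i
    exact hW _ (hg.comp (Fin.strictMono_succAbove i))
  have hexp := Matrix.det_succ_column M (Fin.last k)
  rw [hdet0] at hexp
  have hexp' : 0 = ∑ i : Fin (k+1), (-1:ℝ)^((i:ℕ) + k) * u (g i) * D i := by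
    rw [hexp]
    apply Finset.sum_congr rfl
    intro i _
    rw [hlastcol i, hsub i]
    simp [Fin.val_last]
    exact Or.inl rfl
  have h2 : ∑ i : Fin (k+1), (ε * (-1)^(i:ℕ) * u (g i)) * (s * D i) = 0 := by
    have hterm : ∀ i : Fin (k+1), (ε * (-1)^(i:ℕ) * u (g i)) * (s * D i)
        = (ε * s * (-1)^k) * ((-1)^((i:ℕ) + k) * u (g i) * D i) := by
      intro i
      have hp : (-1:ℝ)^((i:ℕ)+k) * (-1)^k = (-1)^(i:ℕ) := by
        rw [← pow_add, show (i:ℕ) + k + k = (i:ℕ) + 2*k by ring, pow_add, pow_mul]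
        norm_num
      rw [← hp]
      ring
    rw [Finset.sum_congr rfl (fun i _ => hterm i), ← Finset.mul_sum, ← hexp', mul_zero]
  have hzero : ∀ i : Fin (k+1), u (g i) = 0 := by
    intro i
    have hall := (Finset.sum_eq_zero_iff_of_nonneg
      (fun i _ => mul_nonneg (halt i) (hDpos i).le)).mp h2 i (Finset.mem_univ i)
    rcases mul_eq_zero.mp hall with h | h
    · rcases mul_eq_zero.mp h with h' | h'
      · rcases mul_eq_zero.mp h' with h'' | h''
        · exact absurd h'' hε
        · exact absurd h'' (pow_ne_zero _ (by norm_num))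
      · exact h'
    · exact absurd h (ne_of_gt (hDpos i))
  set W' : Matrix (Fin k) (Fin k) ℝ := Matrix.of (fun i j => W (g (Fin.castSucc i)) j) with hW'
  have hWpos : 0 < s * W'.det := hW _ (hg.comp Fin.strictMono_castSucc)
  have hdet' : W'.det ≠ 0 := by
    intro h
    rw [h, mul_zero] at hWpos
    exact lt_irrefl 0 hWpos
  have hmv : W'.mulVec c = 0 := by
    funext i
    show ∑ j, W' i j * c j = 0
    have hz := hzero (Fin.castSucc i)
    rw [hu] at hz
    rw [← hz]
    apply Finset.sum_congr rfl
    intro j _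
    show W (g (Fin.castSucc i)) j * c j = c j * W (g (Fin.castSucc i)) j
    ring
  exact hc (Matrix.eq_zero_of_mulVec_eq_zero hdet' hmv)

end Det

lemma blocks_exist {n k : ℕ} (x : Fin n → ℝ) (hx : x ≠ 0) (hk1 : 1 ≤ k) (hkn : k ≤ n)
    (hsm : sminus x ≤ k - 1) :
    ∃ (c : Fin k → ℝ) (t : Fin k → Fin n → ℝ),
      c ≠ 0 ∧ (∀ j l, 0 ≤ t j l) ∧ (∀ j, ∃ l, 0 < t j l) ∧
      (∀ (j j' : Fin k) (l l' : Fin n), j < j' → t j l ≠ 0 → t j' l' ≠ 0 → l < l') ∧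
      (∀ l, x l = ∑ j, c j * t j l) := by
  classical
  set supp := Finset.univ.filter (fun i => x i ≠ 0) with hsupp
  by_cases hcase : supp.card < k
  · -- padding case
    obtain ⟨T, hsubT, hTcard⟩ := Finset.exists_superset_card_eq (le_of_lt hcase)
      (by rw [Fintype.card_fin]; exact hkn)
    set f := T.orderEmbOfFin hTcard with hf
    refine ⟨fun j => x (f j), fun j l => if f j = l then 1 else 0, ?_, ?_, ?_, ?_, ?_⟩
    · obtain ⟨l₀, hl₀⟩ : ∃ l₀, x l₀ ≠ 0 := by
        by_contra hcc; push_neg at hcc; exact hx (funext hcc)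
      have hmem : l₀ ∈ (T : Set (Fin n)) := hsubT (by rw [hsupp]; simp [hl₀])
      rw [← Finset.range_orderEmbOfFin T hTcard] at hmem
      obtain ⟨j₀, hj₀⟩ := hmem
      intro hcc
      rw [← hj₀] at hl₀
      exact hl₀ (congrFun hcc j₀)
    · intro j l; dsimp only; split_ifs <;> norm_num
    · intro j; exact ⟨f j, by dsimp only; simp⟩
    · intro j j' l l' hjj hl hl'
      dsimp only at hl hl'
      have h1 : f j = l := by by_contra h; exact hl (if_neg h)
      have h2 : f j' = l' := by by_contra h; exact hl' (if_neg h)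
      rw [← h1, ← h2]; exact f.strictMono hjj
    · intro l
      dsimp only
      by_cases hl : l ∈ T
      · have hmem : l ∈ (T : Set (Fin n)) := hl
        rw [← Finset.range_orderEmbOfFin T hTcard] at hmem
        obtain ⟨j₀, hj₀⟩ := hmem
        rw [Finset.sum_eq_single j₀]
        · rw [if_pos hj₀, mul_one, hj₀]
        · intro b _ hb
          have : f b ≠ l := by
            intro h
            exact hb (f.injective (by rw [hj₀, h]))
          rw [if_neg this, mul_zero]
        · intro h; exact absurd (Finset.mem_univ j₀) h
      · have hx0 : x l = 0 := by
          by_contra h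
          exact hl (hsubT (by rw [hsupp]; simp [h]))
        rw [hx0]
        symm; apply Finset.sum_eq_zero
        intro j _
        have : f j ≠ l := fun h => hl (h ▸ Finset.orderEmbOfFin_mem T hTcard j)
        rw [if_neg this, mul_zero]
  · -- main case : k ≤ N
    push_neg at hcase
    set N := supp.card with hN
    have hN1 : 1 ≤ N := le_trans hk1 hcase
    set e := supp.orderEmbOfFin (rfl : supp.card = N) with he
    set v : ℕ → ℝ := fun i => x (e ⟨min i (N-1), by
      have := Nat.min_le_right i (N-1); omega⟩) with hv
    set chg : ℕ → ℕ := fun i => ∑ m ∈ Finset.range i,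
      (if v m * v (m+1) < 0 then 1 else 0) with hchg
    set β : ℕ → ℕ := fun i => max (chg i) (i - (N - k)) with hβ
    have hchg_def : ∀ i, chg i = ∑ m ∈ Finset.range i,
        (if v m * v (m+1) < 0 then 1 else 0) := fun _ => rfl
    have hβ_def : ∀ i, β i = max (chg i) (i - (N - k)) := fun _ => rfl
    have hvx : ∀ (i : Fin N), v (i : ℕ) = x (e i) := by
      intro i
      exact congrArg (fun z => x (e z)) (Fin.ext (show min (i:ℕ) (N-1) = (i:ℕ) by omega))
    have hvne : ∀ i, v i ≠ 0 := by
      intro i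
      have hm := Finset.orderEmbOfFin_mem supp (rfl : supp.card = N)
        ⟨min i (N-1), by have := Nat.min_le_right i (N-1); omega⟩
      rw [Finset.mem_filter] at hm
      exact hm.2
    have hchg_mono : Monotone chg := fun a b hab =>
      Finset.sum_le_sum_of_subset (Finset.range_subset_range.mpr hab)
    have hchg_step : ∀ i, chg (i+1) ≤ chg i + 1 := by
      intro i
      rw [hchg_def (i+1), Finset.sum_range_succ, ← hchg_def i]
      split_ifs <;> omega
    have hβ_mono : Monotone β := by
      intro a b hab
      have h1 : chg a ≤ chg b := hchg_mono hab
      have h2 := le_max_left (chg b) (b - (N-k))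
      have h3 := le_max_right (chg b) (b - (N-k))
      have h4 : β a = max (chg a) (a - (N-k)) := rfl
      have h5 : β b = max (chg b) (b - (N-k)) := rfl
      have h6 := max_choice (chg a) (a - (N-k))
      omega
    have hβ_step : ∀ i, β (i+1) ≤ β i + 1 := by
      intro i
      rw [hβ_def (i+1)]
      apply max_le
      · have h1 := hchg_step i
        have h2 := le_max_left (chg i) (i - (N-k))
        have h3 : β i = max (chg i) (i - (N-k)) := rfl
        omega
      · have h2 := le_max_right (chg i) (i - (N-k))
        have h3 : β i = max (chg i) (i - (N-k)) := rfl
        omega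
    have hchg_total : chg (N - 1) ≤ k - 1 := by
      have hsm2 : sminus x = chg (N-1) := by
        rw [sminus_eq x (rfl : supp.card = N)]
        rw [signChanges_eq_sum, List.length_ofFn, hchg_def]
        apply Finset.sum_congr rfl
        intro m hm
        rw [Finset.mem_range] at hm
        have hm1 : m < N := by omega
        have hm2 : m + 1 < N := by omega
        have g1 : (List.ofFn (fun i : Fin N => x (e i))).getD m 0 = v m := by
          rw [List.getD_eq_getElem _ _ (by rw [List.length_ofFn]; exact hm1),
            List.getElem_ofFn]
          exact (hvx ⟨m, hm1⟩).symm
        have g2 : (List.ofFn (fun i : Fin N => x (e i))).getD (m+1) 0 = v (m+1) := by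
          rw [List.getD_eq_getElem _ _ (by rw [List.length_ofFn]; exact hm2),
            List.getElem_ofFn]
          exact (hvx ⟨m+1, hm2⟩).symm
        rw [g1, g2]
      omega
    have hβ_le : ∀ i, i ≤ N - 1 → β i ≤ k - 1 := by
      intro i hi
      rw [hβ_def]
      apply max_le
      · exact le_trans (hchg_mono hi) hchg_total
      · omega
    have hβ0 : β 0 = 0 := by
      rw [hβ_def, hchg_def]
      simp
    have hβ_last : β (N-1) = k - 1 := by
      rw [hβ_def]
      have h1 : N - 1 - (N - k) = k - 1 := by omega
      rw [h1]
      exact max_eq_right hchg_total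
    have hβsurj : ∀ j : Fin k, ∃ i, β i = (j:ℕ) ∧ i ≤ N - 1 := by
      intro j
      have hjle : (j:ℕ) ≤ β (N-1) := by rw [hβ_last]; omega
      have hP : ∃ i, (j:ℕ) ≤ β i := ⟨N-1, hjle⟩
      have hfind : (j:ℕ) ≤ β (Nat.find hP) := Nat.find_spec hP
      have hi₀le : Nat.find hP ≤ N - 1 := Nat.find_le hjle
      refine ⟨Nat.find hP, ?_, hi₀le⟩
      rcases Nat.eq_zero_or_pos (Nat.find hP) with h0 | hpos
      · rw [h0] at hfind ⊢
        rw [hβ0] at hfind ⊢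
        omega
      · obtain ⟨m, hm⟩ : ∃ m, Nat.find hP = m + 1 := ⟨Nat.find hP - 1, by omega⟩
        have hnot : ¬ ((j:ℕ) ≤ β m) := Nat.find_min hP (by omega)
        have hst := hβ_step m
        rw [hm] at hfind ⊢
        omega
    have hadj : ∀ m, m + 1 ≤ N - 1 → β m = β (m+1) → 0 < v m * v (m+1) := by
      intro m hm hbeq
      by_contra hcc
      have hlt : v m * v (m+1) < 0 :=
        lt_of_le_of_ne (not_lt.mp hcc) (mul_ne_zero (hvne m) (hvne (m+1)))
      have hstep : chg (m+1) = chg m + 1 := by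
        rw [hchg_def (m+1), Finset.sum_range_succ, if_pos hlt, ← hchg_def m]
      have hge1 : chg (m+1) ≤ β (m+1) := le_max_left _ _
      have hge2 : (m+1) - (N-k) ≤ β (m+1) := le_max_right _ _
      have hch1 : β m = chg m ∨ β m = m - (N-k) := max_choice _ _
      have hch2 : chg m ≤ β m := le_max_left _ _
      omega
    have hsame : ∀ a b, a ≤ b → b ≤ N - 1 → β a = β b → 0 < v a * v b := by
      have key : ∀ d a, a + d ≤ N - 1 → β a = β (a + d) → 0 < v a * v (a + d) := by
        intro d
        induction d with
        | zero => intro a _ _; simpa using mul_self_pos.mpr (hvne a)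
        | succ d ih =>
          intro a hle hbeq
          have h1 : β a ≤ β (a+d) := hβ_mono (by omega)
          have h2 : β (a+d) ≤ β (a+d+1) := hβ_mono (by omega)
          have hbeq2 : β a = β (a+d+1) := by rw [← Nat.add_assoc] at hbeq; exact hbeq
          have hmid := ih a (by omega) (by omega)
          have hadj' := hadj (a+d) (by omega) (by omega)
          have hres := sign_trans hmid hadj'
          rw [show a + (d+1) = a + d + 1 by omega]
          exact hres
      intro a b hab hble hbeq
      have hres := key (b - a) a (by omega) (by rw [show a + (b-a) = b by omega]; exact hbeq)
      rw [show a + (b-a) = b by omega] at hres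
      exact hres
    set iso := supp.orderIsoOfFin (rfl : supp.card = N) with hiso
    have hisoe : ∀ i : Fin N, ((iso i : supp) : Fin n) = e i := fun i =>
      Finset.coe_orderIsoOfFin_apply supp rfl i
    set c : Fin k → ℝ := fun j => if 0 < v ((hβsurj j).choose) then 1 else -1 with hc
    set t : Fin k → Fin n → ℝ := fun j l =>
      if hl : l ∈ supp then
        (if β ((iso.symm ⟨l, hl⟩ : Fin N) : ℕ) = (j:ℕ) then |x l| else 0) else 0 with ht
    have hc_def : ∀ j, c j = if 0 < v ((hβsurj j).choose) then 1 else -1 := fun _ => rfl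
    have ht_def : ∀ j l, t j l = if hl : l ∈ supp then
        (if β ((iso.symm ⟨l, hl⟩ : Fin N) : ℕ) = (j:ℕ) then |x l| else 0) else 0 :=
      fun _ _ => rfl
    have hxl_ne : ∀ l ∈ supp, x l ≠ 0 := by
      intro l hl
      rw [Finset.mem_filter] at hl
      exact hl.2
    have hidxval : ∀ l (hl : l ∈ supp), e (iso.symm ⟨l, hl⟩) = l := by
      intro l hl
      rw [← hisoe, OrderIso.apply_symm_apply]
    refine ⟨c, t, ?_, ?_, ?_, ?_, ?_⟩
    · intro hcc
      have hcc0 := congrFun hcc ⟨0, hk1⟩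
      rw [hc_def] at hcc0
      simp only [Pi.zero_apply] at hcc0
      split_ifs at hcc0 <;> norm_num at hcc0
    · intro j l
      rw [ht_def]
      split_ifs <;> simp [abs_nonneg]
    · intro j
      obtain ⟨hβj, hile⟩ := (hβsurj j).choose_spec
      have hi₁N : (hβsurj j).choose < N := by omega
      refine ⟨e ⟨(hβsurj j).choose, hi₁N⟩, ?_⟩
      have hmem : e ⟨(hβsurj j).choose, hi₁N⟩ ∈ supp := Finset.orderEmbOfFin_mem supp rfl _
      rw [ht_def, dif_pos hmem]
      have hsymm : iso.symm ⟨e ⟨(hβsurj j).choose, hi₁N⟩, hmem⟩ = ⟨(hβsurj j).choose, hi₁N⟩ := by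
        rw [OrderIso.symm_apply_eq]
        exact Subtype.ext (hisoe ⟨(hβsurj j).choose, hi₁N⟩).symm
      rw [hsymm]
      rw [if_pos (show β (((⟨(hβsurj j).choose, hi₁N⟩ : Fin N)) : ℕ) = (j:ℕ) from hβj)]
      exact abs_pos.mpr (hxl_ne _ hmem)
    · intro j j' l l' hjj hl hl'
      rw [ht_def] at hl hl'
      by_cases h1 : l ∈ supp
      swap
      · rw [dif_neg h1] at hl; exact absurd rfl hl
      by_cases h2 : l' ∈ supp
      swap
      · rw [dif_neg h2] at hl'; exact absurd rfl hl'
      rw [dif_pos h1] at hl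
      rw [dif_pos h2] at hl'
      have hb1 : β ((iso.symm ⟨l, h1⟩ : Fin N) : ℕ) = (j:ℕ) := by
        by_contra h; rw [if_neg h] at hl; exact hl rfl
      have hb2 : β ((iso.symm ⟨l', h2⟩ : Fin N) : ℕ) = (j':ℕ) := by
        by_contra h; rw [if_neg h] at hl'; exact hl' rfl
      have hjj' : (j:ℕ) < (j':ℕ) := hjj
      have hlt : (iso.symm ⟨l, h1⟩) < (iso.symm ⟨l', h2⟩) := by
        by_contra h
        push_neg at h
        have hmono := hβ_mono (show ((iso.symm ⟨l', h2⟩ : Fin N):ℕ) ≤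
          ((iso.symm ⟨l, h1⟩ : Fin N):ℕ) from h)
        omega
      have hfin : e (iso.symm ⟨l, h1⟩) < e (iso.symm ⟨l', h2⟩) := e.strictMono hlt
      rw [hidxval l h1, hidxval l' h2] at hfin
      exact hfin
    · intro l
      by_cases hl : l ∈ supp
      · have hiN : ((iso.symm ⟨l, hl⟩ : Fin N) : ℕ) ≤ N - 1 := by
          have := (iso.symm ⟨l, hl⟩ : Fin N).2
          omega
        have hβik : β ((iso.symm ⟨l, hl⟩ : Fin N) : ℕ) < k := by
          have := hβ_le _ hiN
          omega
        rw [Finset.sum_eq_single (⟨β ((iso.symm ⟨l, hl⟩ : Fin N) : ℕ), hβik⟩ : Fin k)]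
        · rw [ht_def, dif_pos hl, if_pos rfl]
          obtain ⟨hbi₁, hi₁le⟩ := (hβsurj ⟨β ((iso.symm ⟨l, hl⟩ : Fin N) : ℕ), hβik⟩).choose_spec
          have hprod : 0 < v ((hβsurj ⟨β ((iso.symm ⟨l, hl⟩ : Fin N) : ℕ), hβik⟩).choose)
              * v ((iso.symm ⟨l, hl⟩ : Fin N) : ℕ) := by
            rcases le_total ((hβsurj ⟨β ((iso.symm ⟨l, hl⟩ : Fin N) : ℕ), hβik⟩).choose)
              ((iso.symm ⟨l, hl⟩ : Fin N) : ℕ) with hcmp | hcmp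
            · exact hsame _ _ hcmp hiN (by rw [hbi₁])
            · have hres := hsame _ _ hcmp hi₁le (by rw [hbi₁])
              nlinarith [hres]
          have hvi : v ((iso.symm ⟨l, hl⟩ : Fin N) : ℕ) = x l := by
            rw [hvx (iso.symm ⟨l, hl⟩), hidxval l hl]
          rw [hc_def]
          by_cases hs : 0 < v ((hβsurj ⟨β ((iso.symm ⟨l, hl⟩ : Fin N) : ℕ), hβik⟩).choose)
          · rw [if_pos hs, one_mul]
            have hpos : 0 < x l := by
              rw [← hvi]
              nlinarith [hprod, hs]
            exact (abs_of_pos hpos).symm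
          · rw [if_neg hs, neg_one_mul]
            have hi₁neg : v ((hβsurj ⟨β ((iso.symm ⟨l, hl⟩ : Fin N) : ℕ), hβik⟩).choose) < 0 :=
              lt_of_le_of_ne (not_lt.mp hs) (hvne _)
            have hneg : x l < 0 := by
              rw [← hvi]
              nlinarith [hprod, hi₁neg]
            rw [abs_of_neg hneg]
            ring
        · intro b _ hb
          rw [ht_def, dif_pos hl]
          have hne : β ((iso.symm ⟨l, hl⟩ : Fin N) : ℕ) ≠ (b:ℕ) := by
            intro h
            apply hb
            exact Fin.ext h.symm
          rw [if_neg hne, mul_zero]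
        · intro h; exact absurd (Finset.mem_univ _) h
      · have hx0 : x l = 0 := by
          by_contra h
          exact hl (by rw [hsupp]; simp [h])
        rw [hx0]
        symm
        apply Finset.sum_eq_zero
        intro j _
        rw [ht_def, dif_neg hl, mul_zero]

section Ext

variable {n m : ℕ} (γ : Fin m → Fin n) (v : Fin m → ℝ)

noncomputable def ext0 : Fin n → ℝ := fun l => ∑ j, if γ j = l then v j else 0

lemma ext0_apply (hγ : Function.Injective γ) (j : Fin m) : ext0 γ v (γ j) = v j := by
  rw [ext0, Finset.sum_eq_single j]
  · rw [if_pos rfl]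
  · intro b _ hb
    exact if_neg (fun h => hb (hγ h))
  · intro h; exact absurd (Finset.mem_univ j) h

lemma ext0_eq_zero {l : Fin n} (h : ∀ j, γ j ≠ l) : ext0 γ v l = 0 := by
  rw [ext0]
  exact Finset.sum_eq_zero (fun j _ => if_neg (h j))

lemma ext0_mulVec (A : Matrix (Fin n) (Fin n) ℝ) (i : Fin n) :
    A.mulVec (ext0 γ v) i = ∑ j, A i (γ j) * v j := by
  show ∑ l, A i l * ext0 γ v l = _
  simp only [ext0, Finset.mul_sum]
  rw [Finset.sum_comm]
  apply Finset.sum_congr rfl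
  intro j _
  rw [show (∑ l, A i l * if γ j = l then v j else 0)
      = ∑ l, (if γ j = l then A i l * v j else 0) from
    Finset.sum_congr rfl (fun l _ => by split_ifs <;> simp)]
  rw [Finset.sum_ite_eq Finset.univ (γ j) (fun l => A i l * v j), if_pos (Finset.mem_univ _)]

lemma ext0_card_le :
    (Finset.univ.filter (fun l => ext0 γ v l ≠ 0)).card ≤ m := by
  have hsub : Finset.univ.filter (fun l => ext0 γ v l ≠ 0) ⊆ Finset.image γ Finset.univ := by
    intro l hl
    rw [Finset.mem_filter] at hl
    by_contra hc
    rw [Finset.mem_image] at hc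
    push_neg at hc
    exact hl.2 (ext0_eq_zero γ v (fun j h => hc j (Finset.mem_univ j) h))
  exact le_trans (Finset.card_le_card hsub)
    (le_trans Finset.card_image_le (by rw [Finset.card_univ, Fintype.card_fin]))

end Ext

section Zeros

lemma splus_ge_of_zeros {n k : ℕ} (u : Fin n → ℝ) (r : Fin k → Fin n) (hr : StrictMono r)
    (hkn : k < n) (hz : ∀ i, u (r i) = 0) : k ≤ splus u := by
  classical
  have hn : 0 < n := by omega
  set R := Finset.image r Finset.univ with hR
  have hRcard : R.card = k := by
    rw [hR, Finset.card_image_of_injective _ hr.injective, Finset.card_univ, Fintype.card_fin]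
  obtain ⟨istar, histar⟩ : ∃ i, i ∉ R := by
    by_contra h
    push_neg at h
    have : Finset.univ ⊆ R := fun i _ => h i
    have := Finset.card_le_card this
    rw [hRcard, Finset.card_univ, Fintype.card_fin] at this
    omega
  set T := insert istar R with hT
  have hTcard : T.card = k + 1 := by
    rw [hT, Finset.card_insert_of_notMem histar, hRcard]
  set g := T.orderEmbOfFin hTcard with hg
  have histarT : istar ∈ (T : Set (Fin n)) := by rw [hT]; simp
  rw [← Finset.range_orderEmbOfFin T hTcard] at histarT
  obtain ⟨jstar, hjstar⟩ := histarT
  have huval : ∀ j : Fin (k+1), g j ≠ istar → u (g j) = 0 := by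
    intro j hj
    have : g j ∈ T := Finset.orderEmbOfFin_mem T hTcard j
    rw [hT, Finset.mem_insert] at this
    rcases this with h | h
    · exact absurd h hj
    · rw [hR, Finset.mem_image] at h
      obtain ⟨i, _, hi⟩ := h
      rw [← hi]
      exact hz i
  rw [splus_ge_iff hn u]
  refine ⟨if 0 ≤ (-1:ℝ)^((jstar:ℕ)) * u istar then 1 else -1, ?_, g, g.strictMono, ?_⟩
  · split_ifs <;> norm_num
  · intro j
    by_cases hj : g j = istar
    · have hjeq : j = jstar := g.injective (by rw [hj, hjstar])
      subst hjeq
      rw [hj]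
      split_ifs with h
      · rw [one_mul]; exact h
      · push_neg at h
        nlinarith [h]
    · rw [huval j hj, mul_zero]

end Zeros

section Step1

lemma minors_ne_zero {n k : ℕ} (A : Matrix (Fin n) (Fin n) ℝ) (hA : IsUnit A.det)
    (hVD : ∀ x : Fin n → ℝ, x ≠ 0 → sminus x ≤ k - 1 → splus (A.mulVec x) ≤ k - 1)
    (hk1 : 1 ≤ k) (hkn : k ≤ n) (r c : Fin k → Fin n) (hr : StrictMono r) (hc : StrictMono c) :
    (A.submatrix r c).det ≠ 0 := by
  intro hdet
  obtain ⟨v, hv0, hv⟩ := Matrix.exists_mulVec_eq_zero_iff.mpr hdet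
  set x := ext0 c v with hx
  obtain ⟨j₀, hj₀⟩ := Function.ne_iff.mp hv0
  have hxne : x ≠ 0 := by
    intro h
    have := congrFun h (c j₀)
    rw [hx, ext0_apply c v hc.injective j₀] at this
    exact hj₀ this
  have hsm : sminus x ≤ k - 1 := sminus_le_card_sub_one x (ext0_card_le c v)
  have hAx0 : ∀ i : Fin k, A.mulVec x (r i) = 0 := by
    intro i
    rw [hx, ext0_mulVec]
    have := congrFun hv i
    rw [Matrix.mulVec, Pi.zero_apply] at this
    rw [← this]
    apply Finset.sum_congr rfl
    intro j _
    rfl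
  rcases eq_or_lt_of_le hkn with heq | hlt
  · subst heq
    have hbij : Function.Surjective r := by
      rw [← Finite.injective_iff_surjective]
      exact hr.injective
    have hmv : A.mulVec x = 0 := by
      funext l
      obtain ⟨i, rfl⟩ := hbij l
      exact hAx0 i
    exact hxne (Matrix.eq_zero_of_mulVec_eq_zero (hA.ne_zero) hmv)
  · have h1 := splus_ge_of_zeros (A.mulVec x) r hr hlt hAx0
    have h2 := hVD x hxne hsm
    omega

end Step1

section Laplace

lemma laplace_row {n k : ℕ} (A : Matrix (Fin n) (Fin n) ℝ) (r : Fin k → Fin n)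
    (γ : Fin (k+1) → Fin n) (i : Fin k) :
    ∑ j : Fin (k+1), (-1:ℝ)^(j:ℕ) * A (r i) (γ j) * (A.submatrix r (γ ∘ j.succAbove)).det
      = 0 := by
  set M := A.submatrix (Fin.cons (r i) r : Fin (k+1) → Fin n) γ with hM
  have hrows : M 0 = M i.succ := by
    funext q
    rw [hM]
    simp [Matrix.submatrix, Fin.cons_zero, Fin.cons_succ]
  have hdet0 : M.det = 0 := Matrix.det_zero_of_row_eq (Fin.succ_ne_zero i).symm hrows
  have hexp := Matrix.det_succ_row_zero M
  rw [hdet0] at hexp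
  have hterm : ∀ j : Fin (k+1),
      (-1:ℝ)^(j:ℕ) * M 0 j * (M.submatrix Fin.succ j.succAbove).det
        = (-1:ℝ)^(j:ℕ) * A (r i) (γ j) * (A.submatrix r (γ ∘ j.succAbove)).det := by
    intro j
    have h1 : M 0 j = A (r i) (γ j) := by
      rw [hM]; simp [Matrix.submatrix, Fin.cons_zero]
    have h2 : M.submatrix Fin.succ j.succAbove = A.submatrix r (γ ∘ j.succAbove) := by
      funext p q
      rw [hM]
      simp [Matrix.submatrix, Fin.cons_succ]
    rw [h1, h2]
  rw [← Finset.sum_congr rfl (fun j _ => hterm j)]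
  exact hexp.symm

lemma laplace_col {n k : ℕ} (A : Matrix (Fin n) (Fin n) ℝ) (ρ : Fin (k+1) → Fin n)
    (cm : Fin k → Fin n) (q : Fin k) :
    ∑ i : Fin (k+1), (-1:ℝ)^(i:ℕ) * A (ρ i) (cm q) * (A.submatrix (ρ ∘ i.succAbove) cm).det
      = 0 := by
  set M := A.submatrix ρ (Fin.cons (cm q) cm : Fin (k+1) → Fin n) with hM
  have hcols : ∀ p, M p 0 = M p q.succ := by
    intro p
    rw [hM]
    simp [Matrix.submatrix, Fin.cons_zero, Fin.cons_succ]
  have hdet0 : M.det = 0 := Matrix.det_zero_of_column_eq (Fin.succ_ne_zero q).symm hcols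
  have hexp := Matrix.det_succ_column_zero M
  rw [hdet0] at hexp
  have hterm : ∀ i : Fin (k+1),
      (-1:ℝ)^(i:ℕ) * M i 0 * (M.submatrix i.succAbove Fin.succ).det
        = (-1:ℝ)^(i:ℕ) * A (ρ i) (cm q) * (A.submatrix (ρ ∘ i.succAbove) cm).det := by
    intro i
    have h1 : M i 0 = A (ρ i) (cm q) := by
      rw [hM]; simp [Matrix.submatrix, Fin.cons_zero]
    have h2 : M.submatrix i.succAbove Fin.succ = A.submatrix (ρ ∘ i.succAbove) cm := by
      funext p q'
      rw [hM]
      simp [Matrix.submatrix, Fin.cons_succ]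
    rw [h1, h2]
  rw [← Finset.sum_congr rfl (fun i _ => hterm i)]
  exact hexp.symm

end Laplace

section Adjacent

variable {n k : ℕ} (A : Matrix (Fin n) (Fin n) ℝ)

lemma cols_adjacent (hk1 : 1 ≤ k)
    (hVD : ∀ x : Fin n → ℝ, x ≠ 0 → sminus x ≤ k - 1 → splus (A.mulVec x) ≤ k - 1)
    (hnz : ∀ (r c : Fin k → Fin n), StrictMono r → StrictMono c → (A.submatrix r c).det ≠ 0)
    (r : Fin k → Fin n) (hr : StrictMono r) (γ : Fin (k+1) → Fin n) (hγ : StrictMono γ) :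
    ∀ j j' : Fin (k+1), 0 < (A.submatrix r (γ ∘ j.succAbove)).det *
      (A.submatrix r (γ ∘ j'.succAbove)).det := by
  classical
  have hkn : k + 1 ≤ n := by
    have h1 : (Finset.image γ Finset.univ).card = k + 1 := by
      rw [Finset.card_image_of_injective _ hγ.injective, Finset.card_univ, Fintype.card_fin]
    have h2 := Finset.card_le_card (Finset.subset_univ (Finset.image γ Finset.univ))
    rw [h1, Finset.card_univ, Fintype.card_fin] at h2
    exact h2
  set D : Fin (k+1) → ℝ := fun j => (A.submatrix r (γ ∘ j.succAbove)).det with hD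
  have hDne : ∀ j, D j ≠ 0 := fun j =>
    hnz r _ hr (hγ.comp (Fin.strictMono_succAbove j))
  -- adjacent pairs
  have hadj : ∀ m : ℕ, (hm : m < k) →
      0 < D ⟨m, by omega⟩ * D ⟨m+1, by omega⟩ := by
    intro m hm
    by_contra hcc
    have hlt : D ⟨m, by omega⟩ * D ⟨m+1, by omega⟩ < 0 :=
      lt_of_le_of_ne (not_lt.mp hcc) (mul_ne_zero (hDne _) (hDne _))
    set v : Fin (k+1) → ℝ := fun j => (-1:ℝ)^(j:ℕ) * D j with hv
    have hvne : ∀ j, v j ≠ 0 := fun j =>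
      mul_ne_zero (pow_ne_zero _ (by norm_num)) (hDne j)
    set x := ext0 γ v with hx
    have hxγ : ∀ j, x (γ j) = v j := fun j => ext0_apply γ v hγ.injective j
    have hxne : x ≠ 0 := by
      intro h
      have := congrFun h (γ 0)
      rw [hxγ 0] at this
      exact hvne 0 this
    have hAx0 : ∀ i : Fin k, A.mulVec x (r i) = 0 := by
      intro i
      rw [hx, ext0_mulVec]
      have hl := laplace_row A r γ i
      rw [← hl]
      apply Finset.sum_congr rfl
      intro j _
      rw [hv]
      ring
    -- sminus bound
    have hsm : sminus x ≤ k - 1 := by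
      rw [sminus_eq_of_support x γ hγ (fun j => by rw [hxγ]; exact hvne j)
        (fun l hl => ext0_eq_zero γ v hl)]
      rw [signChanges_eq_sum, List.length_ofFn]
      have hlen : k + 1 - 1 = k := by omega
      rw [hlen]
      have hgetD : ∀ p : ℕ, (hp : p < k + 1) →
          (List.ofFn (x ∘ γ)).getD p 0 = v ⟨p, hp⟩ := by
        intro p hp
        rw [List.getD_eq_getElem _ _ (by rw [List.length_ofFn]; exact hp), List.getElem_ofFn]
        exact hxγ ⟨p, hp⟩
      have hm0 : m ∈ Finset.range k := Finset.mem_range.mpr hm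
      rw [← Finset.sum_erase_add _ _ hm0]
      have hzero : (if (List.ofFn (x ∘ γ)).getD m 0 * (List.ofFn (x ∘ γ)).getD (m+1) 0 < 0
          then 1 else 0) = 0 := by
        rw [hgetD m (by omega), hgetD (m+1) (by omega)]
        rw [if_neg]
        push_neg
        rw [hv]
        simp only []
        have hrw : (-1:ℝ)^(m:ℕ) * D ⟨m, by omega⟩ * ((-1:ℝ)^((m+1:ℕ)) * D ⟨m+1, by omega⟩)
            = -((-1:ℝ)^m * (-1:ℝ)^m) * (D ⟨m, by omega⟩ * D ⟨m+1, by omega⟩) := by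
          rw [pow_succ]
          ring
        rw [hrw, ← pow_add, ← two_mul, pow_mul]
        norm_num
        nlinarith [hlt]
      rw [hzero, add_zero]
      calc ∑ p ∈ (Finset.range k).erase m, (if (List.ofFn (x ∘ γ)).getD p 0 *
            (List.ofFn (x ∘ γ)).getD (p+1) 0 < 0 then 1 else 0)
          ≤ ∑ p ∈ (Finset.range k).erase m, 1 :=
            Finset.sum_le_sum (fun p _ => by split_ifs <;> omega)
        _ = k - 1 := by
            rw [Finset.sum_const, smul_eq_mul, mul_one, Finset.card_erase_of_mem hm0,
              Finset.card_range]
    have h1 := splus_ge_of_zeros (A.mulVec x) r hr (by omega) hAx0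
    have h2 := hVD x hxne hsm
    omega
  -- chain
  have hD0 : ∀ j : Fin (k+1), 0 < D j * D 0 := by
    intro j
    obtain ⟨m, hm⟩ : ∃ m, (j : ℕ) = m := ⟨j, rfl⟩
    have : ∀ m (hmk : m < k + 1), 0 < D ⟨m, hmk⟩ * D 0 := by
      intro m
      induction m with
      | zero => intro h; exact mul_self_pos.mpr (hDne _)
      | succ p ih =>
        intro hmk
        have h1 := hadj p (by omega)
        have h2 := ih (by omega)
        exact sign_trans (by nlinarith [h1] : 0 < D ⟨p+1, hmk⟩ * D ⟨p, by omega⟩) h2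
    have hj : j = ⟨(j:ℕ), j.2⟩ := by exact Fin.ext rfl
    rw [hj]
    exact this _ _
  intro j j'
  have h1 := hD0 j
  have h2 := hD0 j'
  exact sign_trans h1 (by nlinarith [h2] : 0 < D 0 * D j')

end Adjacent

section AdjacentRows

variable {n k : ℕ} (A : Matrix (Fin n) (Fin n) ℝ)

lemma rows_adjacent (hk1 : 1 ≤ k)
    (hVD : ∀ x : Fin n → ℝ, x ≠ 0 → sminus x ≤ k - 1 → splus (A.mulVec x) ≤ k - 1)
    (hnz : ∀ (r c : Fin k → Fin n), StrictMono r → StrictMono c → (A.submatrix r c).det ≠ 0)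
    (ρ : Fin (k+1) → Fin n) (hρ : StrictMono ρ) (cm : Fin k → Fin n) (hcm : StrictMono cm) :
    ∀ i i' : Fin (k+1), 0 < (A.submatrix (ρ ∘ i.succAbove) cm).det *
      (A.submatrix (ρ ∘ i'.succAbove) cm).det := by
  classical
  have hn : 0 < n := (ρ 0).pos
  set D : Fin (k+1) → ℝ := fun i => (A.submatrix (ρ ∘ i.succAbove) cm).det with hD
  have hDne : ∀ i, D i ≠ 0 := fun i =>
    hnz _ cm (hρ.comp (Fin.strictMono_succAbove i)) hcm
  set z : Fin (k+1) → ℝ := fun i => (-1:ℝ)^(i:ℕ) * D i with hz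
  have hzne : ∀ i, z i ≠ 0 := fun i =>
    mul_ne_zero (pow_ne_zero _ (by norm_num)) (hDne i)
  have hzB : ∀ q : Fin k, ∑ i, z i * A (ρ i) (cm q) = 0 := by
    intro q
    have hl := laplace_col A ρ cm q
    rw [← hl]
    apply Finset.sum_congr rfl
    intro i _
    rw [hz]
    ring
  have hadj : ∀ m : ℕ, (hm : m < k) →
      0 < D ⟨m, by omega⟩ * D ⟨m+1, by omega⟩ := by
    intro m hm
    by_contra hcc
    have hlt : D ⟨m, by omega⟩ * D ⟨m+1, by omega⟩ < 0 :=
      lt_of_le_of_ne (not_lt.mp hcc) (mul_ne_zero (hDne _) (hDne _))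
    set ic : Fin (k+1) := ⟨m, by omega⟩ with hic
    set is : Fin (k+1) := ⟨m+1, by omega⟩ with his
    have hics : ic ≠ is :=
      Fin.ne_of_val_ne (show (ic : Fin (k+1)).val ≠ (is : Fin (k+1)).val from
        (by show m ≠ m + 1; omega))
    set u : Fin (k+1) → ℝ := fun i =>
      (if i = ic then z is else 0) + (if i = is then -(z ic) else 0) with hu
    have hu_def : ∀ i, u i = (if i = ic then z is else 0) + (if i = is then -(z ic) else 0) :=
      fun _ => rfl
    have hz_def : ∀ i, z i = (-1:ℝ)^(i:ℕ) * D i := fun _ => rfl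
    have huic : u ic = z is := by rw [hu_def]; simp [hics]
    have huis : u is = -(z ic) := by rw [hu_def]; simp [hics.symm]
    have huother : ∀ i, i ≠ ic → i ≠ is → u i = 0 := by
      intro i h1 h2; rw [hu_def]; simp [h1, h2]
    have hzu : ∑ i, z i * u i = 0 := by
      have hterm : ∀ i, z i * u i = (if i = ic then z i * z is else 0)
          + (if i = is then z i * -(z ic) else 0) := by
        intro i
        rw [hu_def]
        split_ifs <;> ring
      rw [Finset.sum_congr rfl (fun i _ => hterm i), Finset.sum_add_distrib,
        Finset.sum_ite_eq' Finset.univ ic (fun i => z i * z is),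
        Finset.sum_ite_eq' Finset.univ is (fun i => z i * -(z ic))]
      simp only [Finset.mem_univ, if_pos]
      ring
    set B' : Matrix (Fin k) (Fin k) ℝ := A.submatrix (ρ ∘ (0 : Fin (k+1)).succAbove) cm with hB'
    have hB'det : B'.det ≠ 0 := hnz _ _ (hρ.comp (Fin.strictMono_succAbove 0)) hcm
    have hB'unit : IsUnit B'.det := isUnit_iff_ne_zero.mpr hB'det
    set cvec : Fin k → ℝ := B'⁻¹.mulVec (fun p => u ((0 : Fin (k+1)).succAbove p)) with hcvec
    have hBc : B'.mulVec cvec = fun p => u ((0 : Fin (k+1)).succAbove p) := by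
      rw [hcvec, Matrix.mulVec_mulVec, Matrix.mul_nonsing_inv _ hB'unit, Matrix.one_mulVec]
    have hfull : ∀ i : Fin (k+1), ∑ q, A (ρ i) (cm q) * cvec q = u i := by
      set w : Fin (k+1) → ℝ := fun i => (∑ q, A (ρ i) (cm q) * cvec q) - u i with hw
      have hw_def : ∀ i, w i = (∑ q, A (ρ i) (cm q) * cvec q) - u i := fun _ => rfl
      have hsa : ∀ p : Fin k, (0 : Fin (k+1)).succAbove p = Fin.succ p := fun p => by
        rw [Fin.succAbove_zero]
      have hwsucc : ∀ p : Fin k, w (Fin.succ p) = 0 := by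
        intro p
        rw [hw_def]
        have hp := congrFun hBc p
        have hmv : B'.mulVec cvec p = ∑ q, A (ρ (Fin.succ p)) (cm q) * cvec q := by
          rw [Matrix.mulVec, dotProduct]
          apply Finset.sum_congr rfl
          intro q _
          rw [hB']
          show A (ρ ((0 : Fin (k+1)).succAbove p)) (cm q) * cvec q = _
          rw [hsa p]
        rw [hmv] at hp
        rw [hp, hsa p]
        ring
      have h1 : ∑ i, z i * (∑ q, A (ρ i) (cm q) * cvec q) = 0 := by
        have hc1 : ∀ i, z i * (∑ q, A (ρ i) (cm q) * cvec q)
            = ∑ q, (z i * A (ρ i) (cm q)) * cvec q := by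
          intro i
          rw [Finset.mul_sum]
          apply Finset.sum_congr rfl
          intro q _
          ring
        rw [Finset.sum_congr rfl (fun i _ => hc1 i), Finset.sum_comm]
        apply Finset.sum_eq_zero
        intro q _
        rw [← Finset.sum_mul, hzB q, zero_mul]
      have hzw : ∑ i, z i * w i = 0 := by
        have : ∀ i, z i * w i = z i * (∑ q, A (ρ i) (cm q) * cvec q) - z i * u i := by
          intro i; rw [hw_def]; ring
        rw [Finset.sum_congr rfl (fun i _ => this i), Finset.sum_sub_distrib, h1, hzu, sub_zero]
      have hw0 : w 0 = 0 := by
        have hsum : ∑ i, z i * w i = z 0 * w 0 := by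
          rw [Fin.sum_univ_succ]
          rw [Finset.sum_eq_zero (fun p _ => by rw [hwsucc p, mul_zero])]
          simp
        rw [hzw] at hsum
        rcases mul_eq_zero.mp hsum.symm with h | h
        · exact absurd h (hzne 0)
        · exact h
      intro i
      induction i using Fin.cases with
      | zero =>
        have := hw0
        rw [hw_def] at this
        linarith [this]
      | succ p =>
        have := hwsucc p
        rw [hw_def] at this
        linarith [this]
    set x := ext0 cm cvec with hx
    have hxcm : ∀ q, x (cm q) = cvec q := fun q => ext0_apply _ _ hcm.injective q
    have hAxρ : ∀ i, A.mulVec x (ρ i) = u i := by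
      intro i; rw [hx, ext0_mulVec]; exact hfull i
    have hxne : x ≠ 0 := by
      intro h
      have h0 : (0:ℝ) = u ic := by
        rw [← hAxρ ic, hx]
        rw [show ext0 cm cvec = x from rfl, h, Matrix.mulVec_zero]
        rfl
      rw [huic] at h0
      exact hzne is h0.symm
    have hsm : sminus x ≤ k - 1 := sminus_le_card_sub_one x (ext0_card_le cm cvec)
    have hmm : ((-1:ℝ)^m * (-1:ℝ)^m) = 1 := by
      rw [← pow_add, ← two_mul, pow_mul]; norm_num
    have hzz : 0 < z ic * z is := by
      have he : z ic * z is = -((-1:ℝ)^m * (-1:ℝ)^m) * (D ic * D is) := by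
        rw [hz_def, hz_def]
        rw [show ((ic : Fin (k+1)) : ℕ) = m from rfl, show ((is : Fin (k+1)) : ℕ) = m + 1 from rfl]
        rw [pow_succ]
        ring
      rw [he, hmm]
      have : D ic * D is < 0 := hlt
      nlinarith [this]
    set ε : ℝ := if 0 ≤ (-1:ℝ)^m * z is then 1 else -1 with hε
    have hε_def : ε = if 0 ≤ (-1:ℝ)^m * z is then 1 else -1 := rfl
    have hεne : ε ≠ 0 := by rw [hε_def]; split_ifs <;> norm_num
    have hε2 : ε * ε = 1 := by rw [hε_def]; split_ifs <;> norm_num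
    have hεzis : 0 ≤ ε * (-1:ℝ)^m * z is := by
      rw [hε_def]; split_ifs with h
      · rw [one_mul]; exact h
      · push_neg at h; nlinarith [h]
    have hεzis' : 0 < ε * (-1:ℝ)^m * z is :=
      lt_of_le_of_ne hεzis (Ne.symm (mul_ne_zero (mul_ne_zero hεne
        (pow_ne_zero _ (by norm_num))) (hzne is)))
    have hεzic : 0 < ε * (-1:ℝ)^m * z ic := by
      have hab : (ε * (-1:ℝ)^m * z ic) * (ε * (-1:ℝ)^m * z is)
          = (ε*ε) * (((-1:ℝ)^m * (-1:ℝ)^m)) * (z ic * z is) := by ring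
      rw [hε2, hmm, one_mul, one_mul] at hab
      by_contra hle
      push_neg at hle
      have := mul_nonpos_of_nonpos_of_nonneg hle hεzis'.le
      rw [hab] at this
      linarith [hzz]
    have halt : ∀ i : Fin (k+1), 0 ≤ ε * (-1:ℝ)^(i:ℕ) * (A.mulVec x) (ρ i) := by
      intro i
      rw [hAxρ i]
      by_cases h1 : i = ic
      · subst h1
        rw [huic]
        exact hεzis'.le
      by_cases h2 : i = is
      · subst h2
        rw [huis]
        have heq : ε * (-1:ℝ)^(((is : Fin (k+1))) : ℕ) * (-(z ic)) = ε * (-1:ℝ)^m * z ic := by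
          rw [show ((is : Fin (k+1)) : ℕ) = m + 1 from rfl, pow_succ]
          ring
        rw [heq]
        exact hεzic.le
      · rw [huother i h1 h2, mul_zero]
    have hsp := (splus_ge_iff hn (A.mulVec x)).mpr ⟨ε, hεne, ρ, hρ, halt⟩
    have h2 := hVD x hxne hsm
    omega
  -- chain
  have hD0 : ∀ i : Fin (k+1), 0 < D i * D 0 := by
    intro i
    have hall : ∀ m (hmk : m < k + 1), 0 < D ⟨m, hmk⟩ * D 0 := by
      intro m
      induction m with
      | zero => intro h; exact mul_self_pos.mpr (hDne _)
      | succ p ih =>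
        intro hmk
        have h1 := hadj p (by omega)
        have h2 := ih (by omega)
        exact sign_trans (by nlinarith [h1] : 0 < D ⟨p+1, hmk⟩ * D ⟨p, by omega⟩) h2
    have hj : i = ⟨(i:ℕ), i.2⟩ := Fin.ext rfl
    rw [hj]
    exact hall _ _
  intro i i'
  exact sign_trans (hD0 i) (by nlinarith [hD0 i'] : 0 < D 0 * D i')

end AdjacentRows

section Connect

variable {n k : ℕ} (A : Matrix (Fin n) (Fin n) ℝ)

lemma del_ident (Γ : Finset (Fin n)) (hΓ : Γ.card = k+1) (β : Finset (Fin n))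
    (hβ : β.card = k) (hsub : β ⊆ Γ) :
    ∃ j : Fin (k+1), ⇑(β.orderEmbOfFin hβ) = ⇑(Γ.orderEmbOfFin hΓ) ∘ j.succAbove := by
  classical
  have hcard : (Γ \ β).card = 1 := by
    rw [Finset.card_sdiff_of_subset hsub, hΓ, hβ]
    omega
  obtain ⟨b, hb⟩ := Finset.card_eq_one.mp hcard
  have hbΓ : b ∈ Γ := by
    have : b ∈ Γ \ β := by rw [hb]; simp
    exact (Finset.mem_sdiff.mp this).1
  have hbβ : b ∉ β := by
    have : b ∈ Γ \ β := by rw [hb]; simp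
    exact (Finset.mem_sdiff.mp this).2
  have hbmem : b ∈ (Γ : Set (Fin n)) := hbΓ
  rw [← Finset.range_orderEmbOfFin Γ hΓ] at hbmem
  obtain ⟨j, hj⟩ := hbmem
  refine ⟨j, ?_⟩
  have hmono : StrictMono (⇑(Γ.orderEmbOfFin hΓ) ∘ j.succAbove) :=
    (Γ.orderEmbOfFin hΓ).strictMono.comp (Fin.strictMono_succAbove j)
  have hmem : ∀ q, (⇑(Γ.orderEmbOfFin hΓ) ∘ j.succAbove) q ∈ β := by
    intro q
    have h1 : (Γ.orderEmbOfFin hΓ) (j.succAbove q) ∈ Γ := Finset.orderEmbOfFin_mem _ _ _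
    have h2 : (Γ.orderEmbOfFin hΓ) (j.succAbove q) ≠ b := by
      rw [← hj]
      intro h
      exact Fin.succAbove_ne j q ((Γ.orderEmbOfFin hΓ).injective h)
    by_contra hc
    have : (Γ.orderEmbOfFin hΓ) (j.succAbove q) ∈ Γ \ β := Finset.mem_sdiff.mpr ⟨h1, hc⟩
    rw [hb, Finset.mem_singleton] at this
    exact h2 this
  exact (Finset.orderEmbOfFin_unique hβ hmem hmono).symm

lemma cols_all (hk1 : 1 ≤ k)
    (hVD : ∀ x : Fin n → ℝ, x ≠ 0 → sminus x ≤ k - 1 → splus (A.mulVec x) ≤ k - 1)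
    (hnz : ∀ (r c : Fin k → Fin n), StrictMono r → StrictMono c → (A.submatrix r c).det ≠ 0)
    (α : Finset (Fin n)) (hα : α.card = k) :
    ∀ (d : ℕ) (β β' : Finset (Fin n)) (hβ : β.card = k) (hβ' : β'.card = k),
      (β \ β').card = d →
      0 < (A.submatrix (α.orderEmbOfFin hα) (β.orderEmbOfFin hβ)).det *
          (A.submatrix (α.orderEmbOfFin hα) (β'.orderEmbOfFin hβ')).det := by
  classical
  intro d
  induction d using Nat.strong_induction_on with
  | _ d ih =>
    intro β β' hβ hβ' hd
    by_cases heq : β = β'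
    · subst heq
      exact mul_self_pos.mpr (hnz _ _ (α.orderEmbOfFin hα).strictMono
        (β.orderEmbOfFin hβ).strictMono)
    · have hdpos : 0 < d := by
        rcases Nat.eq_zero_or_pos d with h0 | h
        · exfalso
          rw [h0] at hd
          have hsub : β ⊆ β' := by
            intro y hy
            by_contra hc
            have : y ∈ β \ β' := Finset.mem_sdiff.mpr ⟨hy, hc⟩
            rw [Finset.card_eq_zero.mp hd] at this
            simp at this
          exact heq (Finset.eq_of_subset_of_card_le hsub (by omega))
        · exact h
      have hne1 : (β \ β').Nonempty := by
        rw [← Finset.card_pos, hd]; omega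
      have hcomm : (β' \ β).card = (β \ β').card := by
        have h1 := Finset.card_sdiff_add_card_inter β β'
        have h2 := Finset.card_sdiff_add_card_inter β' β
        rw [Finset.inter_comm] at h2
        omega
      have hne2 : (β' \ β).Nonempty := by
        rw [← Finset.card_pos, hcomm, hd]; omega
      obtain ⟨b₁, hb₁⟩ := hne1
      obtain ⟨b₂, hb₂⟩ := hne2
      rw [Finset.mem_sdiff] at hb₁ hb₂
      set Γ := insert b₂ β with hΓdef
      have hΓ : Γ.card = k + 1 := by
        rw [hΓdef, Finset.card_insert_of_notMem hb₂.2, hβ]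
      set β'' := insert b₂ (β.erase b₁) with hβ''def
      have hβ'' : β''.card = k := by
        rw [hβ''def, Finset.card_insert_of_notMem
          (fun h => hb₂.2 (Finset.mem_of_mem_erase h)), Finset.card_erase_of_mem hb₁.1, hβ]
        omega
      have hsub1 : β ⊆ Γ := Finset.subset_insert _ _
      have hsub2 : β'' ⊆ Γ := by
        rw [hβ''def, hΓdef]
        apply Finset.insert_subset_insert
        exact (Finset.erase_subset _ _).trans (Finset.Subset.refl β)
      obtain ⟨j1, hj1⟩ := del_ident Γ hΓ β hβ hsub1
      obtain ⟨j2, hj2⟩ := del_ident Γ hΓ β'' hβ'' hsub2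
      have hstep := cols_adjacent A hk1 hVD hnz (α.orderEmbOfFin hα)
        (α.orderEmbOfFin hα).strictMono (Γ.orderEmbOfFin hΓ)
        (Γ.orderEmbOfFin hΓ).strictMono j1 j2
      rw [← hj1, ← hj2] at hstep
      have hlt : (β'' \ β').card < d := by
        have hset : β'' \ β' = (β \ β').erase b₁ := by
          ext y
          simp only [hβ''def, Finset.mem_sdiff, Finset.mem_insert, Finset.mem_erase]
          constructor
          · rintro ⟨h1 | h1, h2⟩
            · exact absurd (h1 ▸ hb₂.1) h2
            · exact ⟨h1.1, h1.2, h2⟩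
          · rintro ⟨h1, h2, h3⟩
            exact ⟨Or.inr ⟨h1, h2⟩, h3⟩
        rw [hset, Finset.card_erase_of_mem (Finset.mem_sdiff.mpr ⟨hb₁.1, hb₁.2⟩), hd]
        omega
      have hih := ih _ hlt β'' β' hβ'' hβ' rfl
      exact sign_trans hstep hih

lemma rows_all (hk1 : 1 ≤ k)
    (hVD : ∀ x : Fin n → ℝ, x ≠ 0 → sminus x ≤ k - 1 → splus (A.mulVec x) ≤ k - 1)
    (hnz : ∀ (r c : Fin k → Fin n), StrictMono r → StrictMono c → (A.submatrix r c).det ≠ 0)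
    (βc : Finset (Fin n)) (hβc : βc.card = k) :
    ∀ (d : ℕ) (α α' : Finset (Fin n)) (hα : α.card = k) (hα' : α'.card = k),
      (α \ α').card = d →
      0 < (A.submatrix (α.orderEmbOfFin hα) (βc.orderEmbOfFin hβc)).det *
          (A.submatrix (α'.orderEmbOfFin hα') (βc.orderEmbOfFin hβc)).det := by
  classical
  intro d
  induction d using Nat.strong_induction_on with
  | _ d ih =>
    intro α α' hα hα' hd
    by_cases heq : α = α'
    · subst heq
      exact mul_self_pos.mpr (hnz _ _ (α.orderEmbOfFin hα).strictMono
        (βc.orderEmbOfFin hβc).strictMono)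
    · have hdpos : 0 < d := by
        rcases Nat.eq_zero_or_pos d with h0 | h
        · exfalso
          rw [h0] at hd
          have hsub : α ⊆ α' := by
            intro y hy
            by_contra hc
            have : y ∈ α \ α' := Finset.mem_sdiff.mpr ⟨hy, hc⟩
            rw [Finset.card_eq_zero.mp hd] at this
            simp at this
          exact heq (Finset.eq_of_subset_of_card_le hsub (by omega))
        · exact h
      have hne1 : (α \ α').Nonempty := by
        rw [← Finset.card_pos, hd]; omega
      have hcomm : (α' \ α).card = (α \ α').card := by
        have h1 := Finset.card_sdiff_add_card_inter α α'
        have h2 := Finset.card_sdiff_add_card_inter α' α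
        rw [Finset.inter_comm] at h2
        omega
      have hne2 : (α' \ α).Nonempty := by
        rw [← Finset.card_pos, hcomm, hd]; omega
      obtain ⟨b₁, hb₁⟩ := hne1
      obtain ⟨b₂, hb₂⟩ := hne2
      rw [Finset.mem_sdiff] at hb₁ hb₂
      set Γ := insert b₂ α with hΓdef
      have hΓ : Γ.card = k + 1 := by
        rw [hΓdef, Finset.card_insert_of_notMem hb₂.2, hα]
      set α'' := insert b₂ (α.erase b₁) with hα''def
      have hα'' : α''.card = k := by
        rw [hα''def, Finset.card_insert_of_notMem
          (fun h => hb₂.2 (Finset.mem_of_mem_erase h)), Finset.card_erase_of_mem hb₁.1, hα]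
        omega
      have hsub1 : α ⊆ Γ := Finset.subset_insert _ _
      have hsub2 : α'' ⊆ Γ := by
        rw [hα''def, hΓdef]
        apply Finset.insert_subset_insert
        exact (Finset.erase_subset _ _).trans (Finset.Subset.refl α)
      obtain ⟨j1, hj1⟩ := del_ident Γ hΓ α hα hsub1
      obtain ⟨j2, hj2⟩ := del_ident Γ hΓ α'' hα'' hsub2
      have hstep := rows_adjacent A hk1 hVD hnz (Γ.orderEmbOfFin hΓ)
        (Γ.orderEmbOfFin hΓ).strictMono (βc.orderEmbOfFin hβc)
        (βc.orderEmbOfFin hβc).strictMono j1 j2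
      rw [← hj1, ← hj2] at hstep
      have hlt : (α'' \ α').card < d := by
        have hset : α'' \ α' = (α \ α').erase b₁ := by
          ext y
          simp only [hα''def, Finset.mem_sdiff, Finset.mem_insert, Finset.mem_erase]
          constructor
          · rintro ⟨h1 | h1, h2⟩
            · exact absurd (h1 ▸ hb₂.1) h2
            · exact ⟨h1.1, h1.2, h2⟩
          · rintro ⟨h1, h2, h3⟩
            exact ⟨Or.inr ⟨h1, h2⟩, h3⟩
        rw [hset, Finset.card_erase_of_mem (Finset.mem_sdiff.mpr ⟨hb₁.1, hb₁.2⟩), hd]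
        omega
      have hih := ih _ hlt α'' α' hα'' hα' rfl
      exact sign_trans hstep hih

end Connect

/-- A nonsingular `A` maps every nonzero vector with `s⁻(x) ≤ k-1` to a vector with
`s⁺(Ax) ≤ k-1` iff `A` is strictly sign-regular of order `k` (all `k × k` minors positive,
or all negative). -/
theorem splus_invariant_iff_strictly_sign_regular {n : ℕ} (A : Matrix (Fin n) (Fin n) ℝ)
    (hA : IsUnit A.det) (k : ℕ) (hk1 : 1 ≤ k) (hk : k ≤ n) :
    (∀ x : Fin n → ℝ, x ≠ 0 → sminus x ≤ k - 1 → splus (A.mulVec x) ≤ k - 1) ↔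
      ((∀ α β : {s : Finset (Fin n) // s.card = k},
          0 < (A.submatrix (α.1.orderEmbOfFin α.2) (β.1.orderEmbOfFin β.2)).det) ∨
        (∀ α β : {s : Finset (Fin n) // s.card = k},
          (A.submatrix (α.1.orderEmbOfFin α.2) (β.1.orderEmbOfFin β.2)).det < 0)) := by
  constructor
  · intro hVD
    have hnz : ∀ (r c : Fin k → Fin n), StrictMono r → StrictMono c →
        (A.submatrix r c).det ≠ 0 := fun r c hr hc => minors_ne_zero A hA hVD hk1 hk r c hr hc
    obtain ⟨α₀, -, hα₀⟩ : ∃ t : Finset (Fin n), ∅ ⊆ t ∧ t.card = k :=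
      Finset.exists_superset_card_eq (by simp) (by rw [Fintype.card_fin]; exact hk)
    have hpair : ∀ (α β : Finset (Fin n)) (hα : α.card = k) (hβ : β.card = k),
        0 < (A.submatrix (α₀.orderEmbOfFin hα₀) (α₀.orderEmbOfFin hα₀)).det *
            (A.submatrix (α.orderEmbOfFin hα) (β.orderEmbOfFin hβ)).det := by
      intro α β hα hβ
      have h1 := cols_all A hk1 hVD hnz α₀ hα₀ _ α₀ β hα₀ hβ rfl
      have h2 := rows_all A hk1 hVD hnz β hβ _ α₀ α hα₀ hα rfl
      exact sign_trans h1 h2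
    have hd00 := hnz _ _ (α₀.orderEmbOfFin hα₀).strictMono (α₀.orderEmbOfFin hα₀).strictMono
    rcases lt_or_gt_of_ne hd00 with hneg | hpos
    · right
      intro α β
      have hp := hpair α.1 β.1 α.2 β.2
      nlinarith [hp, hneg]
    · left
      intro α β
      have hp := hpair α.1 β.1 α.2 β.2
      nlinarith [hp, hpos]
  · intro hSSR
    obtain ⟨s, hs, hsm⟩ : ∃ s : ℝ, s ≠ 0 ∧ ∀ (r c : Fin k → Fin n), StrictMono r →
        StrictMono c → 0 < s * (A.submatrix r c).det := by
      have key : ∀ (r c : Fin k → Fin n), StrictMono r → StrictMono c →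
          ∃ (α β : {s : Finset (Fin n) // s.card = k}),
            (A.submatrix r c) = A.submatrix (α.1.orderEmbOfFin α.2) (β.1.orderEmbOfFin β.2) := by
        intro r c hr hc
        have hrcard : (Finset.image r Finset.univ).card = k := by
          rw [Finset.card_image_of_injective _ hr.injective, Finset.card_univ, Fintype.card_fin]
        have hccard : (Finset.image c Finset.univ).card = k := by
          rw [Finset.card_image_of_injective _ hc.injective, Finset.card_univ, Fintype.card_fin]
        refine ⟨⟨_, hrcard⟩, ⟨_, hccard⟩, ?_⟩
        have h1 : r = ⇑((Finset.image r Finset.univ).orderEmbOfFin hrcard) :=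
          Finset.orderEmbOfFin_unique hrcard
            (fun i => Finset.mem_image_of_mem r (Finset.mem_univ i)) hr
        have h2 : c = ⇑((Finset.image c Finset.univ).orderEmbOfFin hccard) :=
          Finset.orderEmbOfFin_unique hccard
            (fun i => Finset.mem_image_of_mem c (Finset.mem_univ i)) hc
        rw [← h1, ← h2]
      rcases hSSR with h | h
      · refine ⟨1, one_ne_zero, fun r c hr hc => ?_⟩
        obtain ⟨α, β, heq⟩ := key r c hr hc
        rw [heq, one_mul]
        exact h α β
      · refine ⟨-1, by norm_num, fun r c hr hc => ?_⟩
        obtain ⟨α, β, heq⟩ := key r c hr hc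
        rw [heq]
        nlinarith [h α β]
    intro x hx hsmx
    by_contra hgt
    push_neg at hgt
    have hsp : k ≤ splus (A.mulVec x) := by omega
    have hn : 0 < n := by omega
    obtain ⟨ε, hεne, g, hg, halt⟩ := (splus_ge_iff hn (A.mulVec x)).mp hsp
    obtain ⟨c, t, hc, ht0, htpos, hord, hxid⟩ := blocks_exist x hx hk1 hk hsmx
    set W : Fin n → Fin k → ℝ := fun i j => ∑ l, t j l * A i l with hWdef
    have hW_def : ∀ i j, W i j = ∑ l, t j l * A i l := fun _ _ => rfl
    have hWpos : ∀ r : Fin k → Fin n, StrictMono r →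
        0 < s * Matrix.det (Matrix.of fun i j => W (r i) j) := by
      intro r hr
      exact det_blocks_pos A s hsm t ht0 htpos hord r hr
    have hu : ∀ i, A.mulVec x i = ∑ j, c j * W i j := by
      intro i
      show ∑ l, A i l * x l = _
      calc ∑ l, A i l * x l = ∑ l, ∑ j, A i l * (c j * t j l) := by
            apply Finset.sum_congr rfl
            intro l _
            rw [hxid l, Finset.mul_sum]
        _ = ∑ j, ∑ l, A i l * (c j * t j l) := Finset.sum_comm
        _ = ∑ j, c j * W i j := by
            apply Finset.sum_congr rfl
            intro j _
            rw [hW_def, Finset.mul_sum]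
            apply Finset.sum_congr rfl
            intro l _
            ring
    exact key_VD W s hWpos c hc (A.mulVec x) hu ε hεne g hg halt
end
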